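/- arXiv:1012.4150 — 5 statements merged into one kernel-verified Lean document; each statement's English description precedes it below -/
import Mathlib

section
/- There exists a constant c with 0 < c ≤ 1 such that for every R > 0 there exists S > 0 with the following property: for every tree T (a connected acyclic simple graph on a countable vertex set, equipped with the graph metric) and every locally compact bounded operator A on ℓ²(V(T),H₀) of propagation at most R, there is a unit vector ξ ∈ ℓ²(V(T),H₀) whose support has diameter at most S and such that ‖Aξ‖ ≥ c‖A‖. In other words, the family of all countable trees has the uniform operator norm localization property. -/
noncomputable section

open scoped ENNReal

/-- ℓ²(Y, H): the Hilbert space of square-summable `H`-valued families indexed by `Y`. -/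
abbrev L2 (Y : Type*) (H : Type*) [NormedAddCommGroup H] [InnerProductSpace ℂ H] : Type _ :=
  lp (fun _ : Y => H) 2

namespace Roe

variable {Y H : Type*} [NormedAddCommGroup H] [InnerProductSpace ℂ H]

set_option maxHeartbeats 1000000 in
/-- The matrix entry `T_{x,y}` of a bounded operator `T` on `ℓ²(Y,H)`: the continuous linear
map on `H` determined by `T_{x,y} v = (T (δ_y ⊗ v)) x`. -/
def entry (T : L2 Y H →L[ℂ] L2 Y H) (x y : Y) : H →L[ℂ] H :=
  letI := Classical.decEq Y
  LinearMap.mkContinuous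
    { toFun := fun v => T (lp.single 2 y v) x
      map_add' := by
        intro v w
        show (T (lp.single 2 y (v + w))) x = (T (lp.single 2 y v)) x + (T (lp.single 2 y w)) x
        have h : lp.single (E := fun _ : Y => H) 2 y (v + w)
            = lp.single 2 y v + lp.single 2 y w := by
          apply lp.ext
          funext j
          by_cases hj : j = y
          · subst hj
            simp only [lp.single_apply_self, lp.coeFn_add, Pi.add_apply]
          · simp only [lp.single_apply_ne _ _ _ hj, lp.coeFn_add, Pi.add_apply, add_zero]
        rw [h, map_add]
        simp only [lp.coeFn_add, Pi.add_apply]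
      map_smul' := by
        intro c v
        show (T (lp.single 2 y (c • v))) x = c • (T (lp.single 2 y v)) x
        rw [lp.single_smul, map_smul]
        simp only [lp.coeFn_smul, Pi.smul_apply] }
    ‖T‖
    (by
      intro v
      show ‖(T (lp.single 2 y v)) x‖ ≤ ‖T‖ * ‖v‖
      have h1 : ‖(T (lp.single 2 y v)) x‖ ≤ ‖T (lp.single 2 y v)‖ :=
        lp.norm_apply_le_norm (by norm_num) _ _
      have h2 : ‖T (lp.single 2 y v)‖ ≤ ‖T‖ * ‖lp.single (E := fun _ : Y => H) 2 y v‖ :=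
        T.le_opNorm _
      have h3 : ‖lp.single (E := fun _ : Y => H) 2 y v‖ = ‖v‖ := by
        simpa using lp.norm_single (E := fun _ : Y => H) (p := 2) (by norm_num) (fun _ => v) y
      calc ‖(T (lp.single 2 y v)) x‖ ≤ ‖T‖ * ‖lp.single (E := fun _ : Y => H) 2 y v‖ :=
            le_trans h1 h2
        _ = ‖T‖ * ‖v‖ := by rw [h3])

/-- `T` has propagation at most `R` with respect to the distance function `d`. -/
def PropagationLE (d : Y → Y → ℝ) (T : L2 Y H →L[ℂ] L2 Y H) (R : ℝ) : Prop :=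
  ∀ x y : Y, R < d x y → entry T x y = 0

/-- A set is bounded with respect to the distance function `d`. -/
def DBounded (d : Y → Y → ℝ) (B : Set Y) : Prop :=
  ∃ C : ℝ, ∀ x ∈ B, ∀ y ∈ B, d x y ≤ C

/-- `T` is locally compact with respect to the distance function `d`: all matrix entries are
compact operators, and over every bounded set only finitely many matrix entries are nonzero. -/
def LocallyCompact (d : Y → Y → ℝ) (T : L2 Y H →L[ℂ] L2 Y H) : Prop :=
  (∀ x y : Y, IsCompactOperator (entry T x y)) ∧
    ∀ B : Set Y, DBounded d B →
      {p : Y × Y | p.1 ∈ B ∧ p.2 ∈ B ∧ entry T p.1 p.2 ≠ 0}.Finite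

/-- Membership in the algebraic Roe algebra `ℂ[Y]`: locally compact and finite propagation. -/
def MemRoeAlgebraic (d : Y → Y → ℝ) (T : L2 Y H →L[ℂ] L2 Y H) : Prop :=
  LocallyCompact d T ∧ ∃ R : ℝ, PropagationLE d T R

/-- The Roe algebra `C*(Y)`: the operator-norm closure of `ℂ[Y]` in `B(ℓ²(Y,H))`. -/
def RoeAlgebra (d : Y → Y → ℝ) : Set (L2 Y H →L[ℂ] L2 Y H) :=
  closure {T | MemRoeAlgebraic d T}

/-- `T` is a ghost operator with respect to the distance function `d`. -/
def IsGhost (d : Y → Y → ℝ) (T : L2 Y H →L[ℂ] L2 Y H) : Prop :=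
  ∀ R : ℝ, 0 < R → ∀ ε : ℝ, 0 < ε → ∃ B : Set Y, DBounded d B ∧
    ∀ ξ : L2 Y H, ‖ξ‖ = 1 →
      (∃ x : Y, x ∉ B ∧ ∀ z : Y, ξ z ≠ 0 → d x z < R) → ‖T ξ‖ < ε

/-- The support of `ξ ∈ ℓ²(Y,H)` has diameter at most `S` for the distance function `d`. -/
def SupportDiamLE (d : Y → Y → ℝ) (ξ : L2 Y H) (S : ℝ) : Prop :=
  ∀ z w : Y, ξ z ≠ 0 → ξ w ≠ 0 → d z w ≤ S

end Roe

/-- `π : X' → X` is a `K`-metric cover: it is surjective, and for every `u` the restriction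
of `π` to the open ball of radius `K` about `u` is a distance-preserving bijection onto the
open ball of radius `K` about `π u`. -/
def IsMetricCover {X' X : Type*} (d' : X' → X' → ℝ) (d : X → X → ℝ)
    (π : X' → X) (K : ℝ) : Prop :=
  Function.Surjective π ∧
    ∀ u : X', Set.BijOn π {w | d' u w < K} {x | d (π u) x < K} ∧
      ∀ w w' : X', d' u w < K → d' u w' < K → d (π w) (π w') = d' w w'

/-- `T'` is the lift of `T` at scale `R` along `π`: its matrix entries are
`T'_{u,v} = T_{π u, π v}` when `d'(u,v) ≤ R` and `0` otherwise. -/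
def IsLift {X' X H : Type*} [NormedAddCommGroup H] [InnerProductSpace ℂ H]
    (π : X' → X) (d' : X' → X' → ℝ)
    (T : L2 X H →L[ℂ] L2 X H) (R : ℝ) (T' : L2 X' H →L[ℂ] L2 X' H) : Prop :=
  ∀ u v : X', (d' u v ≤ R → Roe.entry T' u v = Roe.entry T (π u) (π v)) ∧
    (R < d' u v → Roe.entry T' u v = 0)

/-- `T'` is the lift at scale `S` along `π` of the `n`-th diagonal block `T⁽ⁿ⁾ = PₙTPₙ` of a
bounded operator `T` on `ℓ²(⊔ₙ Vₙ, H)`. -/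
def IsBlockLift {V : ℕ → Type*} {W H : Type*} [NormedAddCommGroup H] [InnerProductSpace ℂ H]
    {n : ℕ} (π : W → V n) (d' : W → W → ℝ)
    (T : L2 (Σ k, V k) H →L[ℂ] L2 (Σ k, V k) H) (S : ℝ)
    (T' : L2 W H →L[ℂ] L2 W H) : Prop :=
  ∀ u v : W, (d' u v ≤ S → Roe.entry T' u v = Roe.entry T ⟨n, π u⟩ ⟨n, π v⟩) ∧
    (S < d' u v → Roe.entry T' u v = 0)

/-- The graph metric of a simple graph, as a real-valued distance function
(shortest path length). -/
def gdist {V : Type*} (G : SimpleGraph V) (u v : V) : ℝ := G.dist u v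



section TreeAux
open SimpleGraph


section TreeGeom

variable {V : Type} {G : SimpleGraph V}

lemma dist_getVert_le (hc : G.Connected) {u v : V} (p : G.Walk u v) (i : ℕ) :
    G.dist u (p.getVert i) ≤ i := by
  induction p generalizing i with
  | nil =>
    rw [Walk.getVert_of_length_le _ (by simp)]
    simp [SimpleGraph.dist_self]
  | @cons a b c h q ih =>
    cases i with
    | zero => simp
    | succ n =>
      rw [Walk.getVert_cons_succ]
      calc G.dist a (q.getVert n) ≤ G.dist a b + G.dist b (q.getVert n) := hc.dist_triangle
        _ ≤ 1 + n := by
            have h1 : G.dist a b ≤ 1 := by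
              simpa using SimpleGraph.dist_le (Walk.cons h (Walk.nil : G.Walk b b))
            have := ih n; omega
        _ ≤ n + 1 := by omega
  
lemma geo_getVert_dist (hc : G.Connected) {u v : V} (p : G.Walk u v)
    (hp : p.length = G.dist u v) {i : ℕ} (hi : i ≤ p.length) :
    G.dist u (p.getVert i) = i ∧ G.dist (p.getVert i) v + i = p.length := by
  have h1 := dist_getVert_le hc p i
  have h2 : G.dist (p.getVert i) v ≤ p.length - i := by
    have h := dist_getVert_le hc p.reverse (p.length - i)
    rw [Walk.getVert_reverse] at h
    have hii : p.length - (p.length - i) = i := by omega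
    rw [hii] at h
    rwa [SimpleGraph.dist_comm]
  have h3 : G.dist u v ≤ G.dist u (p.getVert i) + G.dist (p.getVert i) v := hc.dist_triangle
  omega

variable (hT : G.IsTree)

/-- A chosen geodesic path between two vertices of a tree. -/
noncomputable def geo (u v : V) : G.Walk u v :=
  (hT.isConnected.exists_path_of_dist u v).choose

lemma geo_isPath (u v : V) : (geo hT u v).IsPath :=
  (hT.isConnected.exists_path_of_dist u v).choose_spec.1

lemma geo_length (u v : V) : (geo hT u v).length = G.dist u v :=
  (hT.isConnected.exists_path_of_dist u v).choose_spec.2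

lemma eq_geo {u v : V} (p : G.Walk u v) (hp : p.IsPath) : p = geo hT u v := by
  obtain ⟨q, -, hq⟩ := hT.existsUnique_path u v
  rw [hq p hp, hq (geo hT u v) (geo_isPath hT u v)]

variable (r₀ : V)

/-- The ancestor at level `μ` of a vertex in a rooted tree. -/
noncomputable def anc (μ : ℕ) (v : V) : V := (geo hT r₀ v).getVert μ

lemma anc_dist {μ : ℕ} {v : V} (hμ : μ ≤ G.dist r₀ v) :
    G.dist r₀ (anc hT r₀ μ v) = μ ∧ G.dist (anc hT r₀ μ v) v + μ = G.dist r₀ v := by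
  have := geo_getVert_dist hT.isConnected (geo hT r₀ v) (geo_length hT r₀ v)
    (i := μ) (by rw [geo_length]; exact hμ)
  rwa [geo_length] at this

lemma anc_zero (v : V) : anc hT r₀ 0 v = r₀ := Walk.getVert_zero _

lemma anc_unique {v x : V} {μ : ℕ} (hx1 : G.dist r₀ x = μ)
    (hx2 : G.dist r₀ x + G.dist x v = G.dist r₀ v) : anc hT r₀ μ v = x := by
  have hw : ((geo hT r₀ x).append (geo hT x v)).length = G.dist r₀ v := by
    rw [Walk.length_append, geo_length, geo_length, hx2]
  have hpath : ((geo hT r₀ x).append (geo hT x v)).IsPath :=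
    Walk.isPath_of_length_eq_dist _ hw
  have heq : (geo hT r₀ x).append (geo hT x v) = geo hT r₀ v := eq_geo hT _ hpath
  have : ((geo hT r₀ x).append (geo hT x v)).getVert μ = x := by
    rw [Walk.getVert_append]
    rw [geo_length, hx1]
    simp
  rw [heq] at this
  exact this

lemma anc_mem_support {μ : ℕ} (v : V) (hμ : μ ≤ G.dist r₀ v) :
    anc hT r₀ μ v ∈ (geo hT r₀ v).support := by
  classical
  rw [Walk.mem_support_iff_exists_getVert]
  exact ⟨μ, rfl, by rw [geo_length]; exact hμ⟩

lemma anc_sep {v w : V} {μ : ℕ} (hμv : μ ≤ G.dist r₀ v) (hμw : μ ≤ G.dist r₀ w)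
    (hne : anc hT r₀ μ v ≠ anc hT r₀ μ w) :
    G.dist r₀ v + G.dist r₀ w + 1 ≤ G.dist v w + 2 * μ := by
  classical
  obtain ⟨ha1, ha2⟩ := anc_dist hT r₀ hμw
  set a := anc hT r₀ μ w with ha
  -- a is on the geodesic from v to w
  have hmem : a ∈ ((geo hT r₀ v).append (geo hT v w)).support := by
    have hbp : ((geo hT r₀ v).append (geo hT v w)).bypass = geo hT r₀ w :=
      eq_geo hT _ (Walk.bypass_isPath _)
    have : a ∈ ((geo hT r₀ v).append (geo hT v w)).bypass.support := by
      rw [hbp]; exact anc_mem_support hT r₀ w hμw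
    exact Walk.support_bypass_subset _ this
  rw [Walk.mem_support_append_iff] at hmem
  rcases hmem with hmem | hmem
  · exfalso
    rw [Walk.mem_support_iff_exists_getVert] at hmem
    obtain ⟨n, hn, hnle⟩ := hmem
    have := (geo_getVert_dist hT.isConnected (geo hT r₀ v) (geo_length hT r₀ v) hnle).1
    rw [hn] at this
    rw [ha1] at this
    apply hne
    rw [← this] at hn
    exact (hn.symm ▸ rfl : anc hT r₀ μ v = a)
  · rw [Walk.mem_support_iff_exists_getVert] at hmem
    obtain ⟨i, hi, hile⟩ := hmem
    obtain ⟨hd1, hd2⟩ := geo_getVert_dist hT.isConnected (geo hT v w) (geo_length hT v w) hile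
    rw [hi] at hd1 hd2
    rw [geo_length] at hd2
    -- d(v,w) = d(v,a) + d(a,w)
    -- d(v,a) + μ ≥ d(r₀,v) + 1
    have htri : G.dist r₀ v ≤ μ + G.dist a v := by
      calc G.dist r₀ v ≤ G.dist r₀ a + G.dist a v := hT.isConnected.dist_triangle
        _ = μ + G.dist a v := by rw [ha1]
    have hav : G.dist a v = G.dist v a := SimpleGraph.dist_comm (u := a) (v := v)
    have hstrict : G.dist r₀ v ≠ μ + G.dist a v := by
      intro hcon
      apply hne
      rw [anc_unique hT r₀ (v := v) (x := a) ha1 (by omega)]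
    omega

lemma anc_diam {v w : V} {μ : ℕ} (hμv : μ ≤ G.dist r₀ v) (hμw : μ ≤ G.dist r₀ w)
    (heq : anc hT r₀ μ v = anc hT r₀ μ w) :
    G.dist v w + 2 * μ ≤ G.dist r₀ v + G.dist r₀ w := by
  obtain ⟨hv1, hv2⟩ := anc_dist hT r₀ hμv
  obtain ⟨hw1, hw2⟩ := anc_dist hT r₀ hμw
  rw [heq] at hv2
  have htri : G.dist v w ≤ G.dist v (anc hT r₀ μ w) + G.dist (anc hT r₀ μ w) w :=
    hT.isConnected.dist_triangle
  have h1 : G.dist v (anc hT r₀ μ w) = G.dist (anc hT r₀ μ w) v := SimpleGraph.dist_comm (u := v) (v := anc hT r₀ μ w)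
  omega

lemma level_lip (hc : G.Connected) {v w : V} : G.dist r₀ v ≤ G.dist r₀ w + G.dist v w := by
  have h := hc.dist_triangle (u := r₀) (v := w) (w := v)
  have h2 : G.dist w v = G.dist v w := SimpleGraph.dist_comm (u := w) (v := v)
  omega

end TreeGeom

section Partition

variable {V : Type} {G : SimpleGraph V}

/-- The reference level for the annulus with index `k` (width `r`). -/
def μof (r k : ℕ) : ℕ := if k = 0 then 0 else (k - 1) * r + 1

/-- The index of the piece of the partition containing a vertex. -/
noncomputable def idx (hT : G.IsTree) (r₀ : V) (r : ℕ) (v : V) : ℕ × V :=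
  (G.dist r₀ v / r, anc hT r₀ (μof r (G.dist r₀ v / r)) v)

lemma arith1 {r k μ lv lw d : ℕ} (hμ : μ = μof r k) (h1 : d + 2 * μ ≤ lv + lw)
    (h2 : lv < (k + 1) * r) (h3 : lw < (k + 1) * r) : d ≤ 4 * r := by
  cases k with
  | zero =>
    simp [μof] at hμ
    have e0 : (0 + 1) * r = r := by ring
    omega
  | succ m =>
    simp [μof] at hμ
    have e1 : (m + 1 + 1) * r = m * r + r + r := by ring
    omega

lemma arith2 {r k μ lv lw d : ℕ} (hr : 2 ≤ r) (hk : k ≠ 0) (hμ : μ = μof r k)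
    (h1 : lv + lw + 1 ≤ d + 2 * μ) (h4 : k * r ≤ lv) (h5 : k * r ≤ lw) : r + 1 ≤ d := by
  cases k with
  | zero => exact absurd rfl hk
  | succ m =>
    simp [μof] at hμ
    have e1 : (m + 1) * r = m * r + r := by ring
    omega

lemma arith3 {r kv kw lv lw d : ℕ} (hr : 2 ≤ r) (hpar : kv % 2 = kw % 2) (hne : kv ≠ kw)
    (hv1 : kv * r ≤ lv) (hv2 : lv < (kv + 1) * r) (hw1 : kw * r ≤ lw) (hw2 : lw < (kw + 1) * r)
    (hlip1 : lv ≤ lw + d) (hlip2 : lw ≤ lv + d) : r + 1 ≤ d := by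
  have e1 : (kv + 1) * r = kv * r + r := by ring
  have e2 : (kw + 1) * r = kw * r + r := by ring
  rcases Nat.lt_or_ge kv kw with h | h
  · have hk2 : kv + 2 ≤ kw := by omega
    have : (kv + 2) * r ≤ kw * r := Nat.mul_le_mul_right r hk2
    have e3 : (kv + 2) * r = kv * r + r + r := by ring
    omega
  · have hk2 : kw + 2 ≤ kv := by omega
    have : (kw + 2) * r ≤ kv * r := Nat.mul_le_mul_right r hk2
    have e3 : (kw + 2) * r = kw * r + r + r := by ring
    omega

lemma μof_le {r : ℕ} (ℓ : ℕ) : μof r (ℓ / r) ≤ ℓ / r * r ∧ ℓ / r * r ≤ ℓ := by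
  have hd : ℓ / r * r ≤ ℓ := Nat.div_mul_le_self ℓ r
  refine ⟨?_, hd⟩
  cases hk : ℓ / r with
  | zero => simp [μof]
  | succ m =>
    have h2 : μof r (m + 1) = m * r + 1 := by simp [μof]
    have h3 : (m + 1) * r = m * r + r := by ring
    rcases Nat.eq_zero_or_pos r with h0 | h0
    · subst h0; simp at hk
    · omega

lemma level_lt {r : ℕ} (hr : 1 ≤ r) (ℓ : ℕ) : ℓ < (ℓ / r + 1) * r :=
  (Nat.div_lt_iff_lt_mul (by omega)).1 (Nat.lt_succ_self _)

lemma piece_diam (hT : G.IsTree) (r₀ : V) {r : ℕ} (hr : 1 ≤ r) {v w : V}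
    (h : idx hT r₀ r v = idx hT r₀ r w) : G.dist v w ≤ 4 * r := by
  rw [Prod.ext_iff] at h
  obtain ⟨h1, h2⟩ := h
  simp only [idx] at h1 h2
  obtain ⟨hμv, hμv'⟩ := μof_le (r := r) (G.dist r₀ v)
  obtain ⟨hμw, hμw'⟩ := μof_le (r := r) (G.dist r₀ w)
  rw [← h1] at h2 hμw
  have hd := anc_diam hT r₀ (le_trans hμv hμv') (le_trans hμw (by rw [h1]; exact hμw')) h2
  have hv2 := level_lt hr (G.dist r₀ v)
  have hw2 := level_lt hr (G.dist r₀ w)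
  rw [← h1] at hw2
  exact arith1 rfl hd hv2 hw2

lemma piece_sep (hT : G.IsTree) (r₀ : V) {r : ℕ} (hr : 2 ≤ r) {v w : V}
    (hne : idx hT r₀ r v ≠ idx hT r₀ r w)
    (hpar : (G.dist r₀ v / r) % 2 = (G.dist r₀ w / r) % 2) :
    r + 1 ≤ G.dist v w := by
  by_cases hk : G.dist r₀ v / r = G.dist r₀ w / r
  · -- same annulus, different branches
    obtain ⟨hμv, hμv'⟩ := μof_le (r := r) (G.dist r₀ v)
    obtain ⟨hμw, hμw'⟩ := μof_le (r := r) (G.dist r₀ w)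
    rw [← hk] at hμw
    have hkpos : G.dist r₀ v / r ≠ 0 := by
      intro h0
      apply hne
      unfold idx
      have hz : μof r 0 = 0 := by simp [μof]
      rw [← hk, h0, hz, anc_zero, anc_zero]
    have hanc : anc hT r₀ (μof r (G.dist r₀ v / r)) v
        ≠ anc hT r₀ (μof r (G.dist r₀ v / r)) w := by
      intro hcon
      apply hne
      unfold idx
      rw [← hk, hcon]
    have hsep := anc_sep hT r₀ (μ := μof r (G.dist r₀ v / r))
      (le_trans hμv hμv') (le_trans hμw (by rw [hk]; exact hμw')) hanc
    exact arith2 hr hkpos rfl hsep (le_trans (Nat.le_of_eq rfl) hμv')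
      (by rw [hk]; exact (μof_le (r := r) (G.dist r₀ w)).2)
  · -- annuli with indices differing by at least 2
    have hdv := level_lt (by omega : 1 ≤ r) (G.dist r₀ v)
    have hdw := level_lt (by omega : 1 ≤ r) (G.dist r₀ w)
    have hvk : G.dist r₀ v / r * r ≤ G.dist r₀ v := Nat.div_mul_le_self _ _
    have hwk : G.dist r₀ w / r * r ≤ G.dist r₀ w := Nat.div_mul_le_self _ _
    have hl1 := level_lip r₀ hT.isConnected (v := v) (w := w)
    have hl2 := level_lip r₀ hT.isConnected (v := w) (w := v)
    have hcm : G.dist w v = G.dist v w := SimpleGraph.dist_comm (u := w) (v := v)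
    exact arith3 hr hpar hk hvk hdv hwk hdw (by omega) (by omega)

end Partition

end TreeAux

section AuxAnalysis

variable {Y : Type} {H : Type} [NormedAddCommGroup H] [InnerProductSpace ℂ H]

lemma entry_apply' (T : L2 Y H →L[ℂ] L2 Y H) (x y : Y) (u : H) :
    letI := Classical.decEq Y
    Roe.entry T x y u = T (lp.single 2 y u) x := rfl

lemma apply_sum_single (T : L2 Y H →L[ℂ] L2 Y H) (g : Y → H) (S : Finset Y) (x : Y) :
    letI := Classical.decEq Y
    T (∑ y ∈ S, lp.single 2 y (g y)) x = ∑ y ∈ S, Roe.entry T x y (g y) := by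
  letI := Classical.decEq Y
  rw [map_sum, lp.coeFn_sum, Finset.sum_apply]
  exact Finset.sum_congr rfl fun y _ => rfl

lemma sum_single_apply' (g : Y → H) (S : Finset Y) (x : Y) :
    letI := Classical.decEq Y
    (∑ y ∈ S, lp.single 2 y (g y) : L2 Y H) x = if x ∈ S then g x else 0 := by
  letI := Classical.decEq Y
  rw [lp.coeFn_sum, Finset.sum_apply]
  by_cases hx : x ∈ S
  · rw [if_pos hx, Finset.sum_eq_single_of_mem x hx
      (fun y _ hne => lp.single_apply_ne (E := fun _ : Y => H) 2 y (g y) (Ne.symm hne))]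
    exact lp.single_apply_self (E := fun _ : Y => H) 2 x (g x)
  · rw [if_neg hx, Finset.sum_eq_zero]
    intro y hy
    exact lp.single_apply_ne (E := fun _ : Y => H) 2 y (g y) (fun h => hx (by rw [h]; exact hy))

lemma inner_zero_of_disjoint (u v : L2 Y H) (h : ∀ x, u x = 0 ∨ v x = 0) :
    (inner ℂ u v : ℂ) = 0 := by
  rw [lp.inner_eq_tsum]
  have h' : ∀ x, (inner ℂ (u x) (v x) : ℂ) = 0 := by
    intro x
    rcases h x with h | h <;> simp [h]
  simp [h']

lemma norm_sq_sum_of_orthogonal {ι : Type*} (ψ : ι → L2 Y H) (F : Finset ι)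
    (h : ∀ i ∈ F, ∀ j ∈ F, i ≠ j → (inner ℂ (ψ i) (ψ j) : ℂ) = 0) :
    ‖∑ i ∈ F, ψ i‖ ^ 2 = ∑ i ∈ F, ‖ψ i‖ ^ 2 := by
  have h1 : (inner ℂ (∑ i ∈ F, ψ i) (∑ i ∈ F, ψ i) : ℂ) = ∑ i ∈ F, ((‖ψ i‖ : ℂ)) ^ 2 := by
    rw [sum_inner]
    refine Finset.sum_congr rfl fun i hi => ?_
    rw [inner_sum, Finset.sum_eq_single_of_mem i hi
      (fun j hj hne => h i hi j hj (Ne.symm hne)), inner_self_eq_norm_sq_to_K]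
    norm_cast
  rw [inner_self_eq_norm_sq_to_K (𝕜 := ℂ)] at h1
  have h3 : ((‖∑ i ∈ F, ψ i‖ ^ 2 : ℝ) : ℂ) = ((∑ i ∈ F, ‖ψ i‖ ^ 2 : ℝ) : ℂ) := by
    push_cast
    exact h1
  exact_mod_cast h3

end AuxAnalysis


set_option maxHeartbeats 4000000 in
/-- the family of all countable trees has the uniform operator norm
localization property. -/
theorem trees_uniform_operator_norm_localization
    (H₀ : Type) [NormedAddCommGroup H₀] [InnerProductSpace ℂ H₀] [CompleteSpace H₀]
    [TopologicalSpace.SeparableSpace H₀] (hinf : ¬ FiniteDimensional ℂ H₀) :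
    ∃ c : ℝ, 0 < c ∧ c ≤ 1 ∧
      ∀ R : ℝ, 0 < R → ∃ S : ℝ, 0 < S ∧
        ∀ (V : Type) (_ : Countable V) (G : SimpleGraph V), G.IsTree →
          ∀ A : L2 V H₀ →L[ℂ] L2 V H₀,
            Roe.LocallyCompact (gdist G) A → Roe.PropagationLE (gdist G) A R →
            ∃ ξ : L2 V H₀, ‖ξ‖ = 1 ∧ Roe.SupportDiamLE (gdist G) ξ S ∧
              c * ‖A‖ ≤ ‖A ξ‖ := by
  -- a unit vector of H₀
  have hH : ∃ e : H₀, ‖e‖ = 1 := by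
    have hnt : Nontrivial H₀ := by
      by_contra hcon
      rw [not_nontrivial_iff_subsingleton] at hcon
      exact hinf (Module.Finite.of_basis (Module.Basis.empty (ι := Fin 0) _))
    obtain ⟨x, hx⟩ := exists_ne (0 : H₀)
    refine ⟨‖x‖⁻¹ • x, ?_⟩
    rw [norm_smul, norm_inv, norm_norm, inv_mul_cancel₀ (norm_ne_zero_iff.mpr hx)]
  obtain ⟨e, he⟩ := hH
  refine ⟨1/4, by norm_num, by norm_num, ?_⟩
  intro R hR
  set r : ℕ := 2 * ⌈R⌉₊ with hr_def
  have hr2 : 2 ≤ r := by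
    have h1 : 0 < ⌈R⌉₊ := Nat.ceil_pos.mpr hR
    omega
  have hrR : 2 * R < (r : ℝ) + 1 := by
    have h1 : R ≤ (⌈R⌉₊ : ℝ) := Nat.le_ceil R
    have h2 : ((r : ℕ) : ℝ) = 2 * (⌈R⌉₊ : ℝ) := by rw [hr_def]; push_cast; ring
    linarith
  refine ⟨((4 * r : ℕ) : ℝ), by exact_mod_cast (by omega : 0 < 4 * r), ?_⟩
  intro V _ G hT A _ hProp
  letI := Classical.decEq V
  obtain ⟨r₀⟩ : Nonempty V := hT.isConnected.nonempty
  by_cases hA : A = 0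
  · refine ⟨lp.single 2 r₀ e, ?_, ?_, ?_⟩
    · have h3 : ‖lp.single (E := fun _ : V => H₀) 2 r₀ e‖ = ‖e‖ := by
        simpa using lp.norm_single (E := fun _ : V => H₀) (p := 2) (by norm_num) (fun _ => e) r₀
      rw [h3]
      exact he
    · intro z w hz hw
      have hz' : z = r₀ := by
        by_contra hcon
        exact hz (lp.single_apply_ne (E := fun _ : V => H₀) 2 r₀ e hcon)
      have hw' : w = r₀ := by
        by_contra hcon
        exact hw (lp.single_apply_ne (E := fun _ : V => H₀) 2 r₀ e hcon)
      rw [hz', hw']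
      show ((G.dist r₀ r₀ : ℕ) : ℝ) ≤ _
      rw [SimpleGraph.dist_self]
      exact_mod_cast Nat.zero_le (4 * r)
    · simp only [hA, ContinuousLinearMap.zero_apply, norm_zero, mul_zero, le_refl]
  -- main case
  have hA' : 0 < ‖A‖ := norm_pos_iff.mpr hA
  obtain ⟨η₀, hη₀1, hη₀2⟩ := A.exists_lt_apply_of_lt_opNorm
    (r := 3/4 * ‖A‖) (by linarith)
  have hsum := lp.hasSum_single (E := fun _ : V => H₀) (p := 2) (by norm_num) η₀
  obtain ⟨F, hF⟩ := Metric.tendsto_atTop.mp hsum (1/8) (by norm_num)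
  have hclose : ‖(∑ y ∈ F, lp.single 2 y (η₀ y)) - η₀‖ < 1/8 := by
    have h := hF F le_rfl
    rwa [dist_eq_norm] at h
  set η : L2 V H₀ := ∑ y ∈ F, lp.single 2 y (η₀ y) with hη_def
  have hAη_lb : 5/8 * ‖A‖ ≤ ‖A η‖ := by
    have h1 : ‖A η₀ - A η‖ ≤ ‖A‖ * (1/8) := by
      rw [← map_sub]
      calc ‖A (η₀ - η)‖ ≤ ‖A‖ * ‖η₀ - η‖ := A.le_opNorm _
        _ ≤ ‖A‖ * (1/8) := by
            rw [norm_sub_rev]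
            exact mul_le_mul_of_nonneg_left hclose.le (norm_nonneg _)
    have h2 : ‖A η₀‖ ≤ ‖A η‖ + ‖A η₀ - A η‖ := by
      have e1 : A η + (A η₀ - A η) = A η₀ := by abel
      calc ‖A η₀‖ = ‖A η + (A η₀ - A η)‖ := by rw [e1]
        _ ≤ ‖A η‖ + ‖A η₀ - A η‖ := norm_add_le _ _
    linarith
  have hη_ub : ‖η‖ ≤ 9/8 := by
    have e1 : η₀ + (η - η₀) = η := by abel
    calc ‖η‖ = ‖η₀ + (η - η₀)‖ := by rw [e1]
      _ ≤ ‖η₀‖ + ‖η - η₀‖ := norm_add_le _ _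
      _ ≤ 9/8 := by linarith [hclose.le, hη₀1.le]
  have hkey : 1/2 * ‖A‖ * ‖η‖ ≤ ‖A η‖ := by
    nlinarith [mul_le_mul_of_nonneg_left hη_ub (le_of_lt hA')]
  have hAη_pos : 0 < ‖A η‖ := lt_of_lt_of_le (by linarith) hAη_lb
  have hη_pos : 0 < ‖η‖ := by
    rcases eq_or_ne η 0 with h | h
    · rw [h] at hAη_pos; simp at hAη_pos
    · exact norm_pos_iff.mpr h
  set f : V → ℕ × V := idx hT r₀ r with hf_def
  set ηp : ℕ × V → L2 V H₀ :=
    fun i => ∑ y ∈ F.filter (fun y => f y = i), lp.single 2 y (η₀ y) with hηp_def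
  set I : Finset (ℕ × V) := F.image f with hI_def
  have hη_eq : ∑ i ∈ I, ηp i = η := by
    simp only [hηp_def, hI_def, hη_def]
    exact Finset.sum_fiberwise_of_maps_to (fun y hy => Finset.mem_image_of_mem f hy) _
  -- coordinates
  have hηp_coord : ∀ i x, ηp i x = if x ∈ F.filter (fun y => f y = i) then η₀ x else 0 := by
    intro i x
    simp only [hηp_def]
    exact sum_single_apply' η₀ _ x
  have hAηp_coord : ∀ i x,
      A (ηp i) x = ∑ y ∈ F.filter (fun y => f y = i), Roe.entry A x y (η₀ y) := by
    intro i x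
    simp only [hηp_def]
    exact apply_sum_single A η₀ _ x
  have hentry_dist : ∀ x y : V, Roe.entry A x y ≠ 0 → ((G.dist x y : ℕ) : ℝ) ≤ R := by
    intro x y hxy
    by_contra hcon
    push_neg at hcon
    exact hxy (hProp x y hcon)
  have hsupp : ∀ i x, A (ηp i) x ≠ 0 → ∃ y ∈ F, f y = i ∧ ((G.dist x y : ℕ) : ℝ) ≤ R := by
    intro i x hx
    rw [hAηp_coord] at hx
    obtain ⟨y, hy, hyne⟩ := Finset.exists_ne_zero_of_sum_ne_zero hx
    rw [Finset.mem_filter] at hy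
    refine ⟨y, hy.1, hy.2, hentry_dist x y ?_⟩
    intro h0; rw [h0] at hyne; simp at hyne
  -- choose the good colour class
  obtain ⟨J, hJI, hJpar, hJbig⟩ :
      ∃ J ⊆ I, (∀ i ∈ J, ∀ j ∈ J, i.1 % 2 = j.1 % 2) ∧ ‖A η‖ / 2 ≤ ‖A (∑ i ∈ J, ηp i)‖ := by
    have hsum2 : A η = A (∑ i ∈ I.filter (fun i => i.1 % 2 = 0), ηp i)
        + A (∑ i ∈ I.filter (fun i => ¬ i.1 % 2 = 0), ηp i) := by
      rw [← map_add, Finset.sum_filter_add_sum_filter_not I (fun i => i.1 % 2 = 0) ηp, hη_eq]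
    have htle : ‖A η‖ ≤ ‖A (∑ i ∈ I.filter (fun i => i.1 % 2 = 0), ηp i)‖
        + ‖A (∑ i ∈ I.filter (fun i => ¬ i.1 % 2 = 0), ηp i)‖ := by
      calc ‖A η‖ = ‖_ + _‖ := by rw [← hsum2]
        _ ≤ _ := norm_add_le _ _
    rcases le_or_gt (‖A η‖ / 2) ‖A (∑ i ∈ I.filter (fun i => i.1 % 2 = 0), ηp i)‖ with hc | hc
    · refine ⟨I.filter (fun i => i.1 % 2 = 0), Finset.filter_subset _ _, ?_, hc⟩
      intro i hi j hj
      have h1 := (Finset.mem_filter.mp hi).2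
      have h2 := (Finset.mem_filter.mp hj).2
      omega
    · refine ⟨I.filter (fun i => ¬ i.1 % 2 = 0), Finset.filter_subset _ _, ?_, by linarith⟩
      intro i hi j hj
      have h1 := (Finset.mem_filter.mp hi).2
      have h2 := (Finset.mem_filter.mp hj).2
      omega
  -- orthogonality within the colour class
  have horthA : ∀ i ∈ J, ∀ j ∈ J, i ≠ j → (inner ℂ (A (ηp i)) (A (ηp j)) : ℂ) = 0 := by
    intro i hi j hj hij
    apply inner_zero_of_disjoint
    intro x
    by_contra hcon
    push_neg at hcon
    obtain ⟨h1, h2⟩ := hcon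
    obtain ⟨y, hyF, hyi, hyR⟩ := hsupp i x h1
    obtain ⟨z, hzF, hzj, hzR⟩ := hsupp j x h2
    rw [hf_def] at hyi hzj
    have hyz : idx hT r₀ r y ≠ idx hT r₀ r z := by
      intro hmem
      exact hij (by rw [← hyi, ← hzj, hmem])
    have hpar : (G.dist r₀ y / r) % 2 = (G.dist r₀ z / r) % 2 := by
      have e1 : G.dist r₀ y / r = i.1 := congrArg Prod.fst hyi
      have e2 : G.dist r₀ z / r = j.1 := congrArg Prod.fst hzj
      rw [e1, e2]
      exact hJpar i hi j hj
    have hsep := piece_sep hT r₀ hr2 hyz hpar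
    have htri : G.dist y z ≤ G.dist x y + G.dist x z := by
      have h3 := hT.isConnected.dist_triangle (u := y) (v := x) (w := z)
      have h4 : G.dist y x = G.dist x y := SimpleGraph.dist_comm (u := y) (v := x)
      omega
    have hcast : ((G.dist y z : ℕ) : ℝ) ≤ 2 * R := by
      calc ((G.dist y z : ℕ) : ℝ) ≤ ((G.dist x y : ℕ) : ℝ) + ((G.dist x z : ℕ) : ℝ) := by
            exact_mod_cast htri
        _ ≤ R + R := add_le_add hyR hzR
        _ = 2 * R := by ring
    have hcast2 : ((r : ℕ) : ℝ) + 1 ≤ ((G.dist y z : ℕ) : ℝ) := by exact_mod_cast hsep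
    linarith
  -- orthogonality of the pieces themselves
  have horthη : ∀ i ∈ I, ∀ j ∈ I, i ≠ j → (inner ℂ (ηp i) (ηp j) : ℂ) = 0 := by
    intro i _ j _ hij
    apply inner_zero_of_disjoint
    intro x
    by_contra hcon
    push_neg at hcon
    obtain ⟨h1, h2⟩ := hcon
    have m1 : f x = i := by
      by_contra hm
      have hnotin : x ∉ Finset.filter (fun y => f y = i) F :=
        fun hmem => hm (Finset.mem_filter.mp hmem).2
      exact h1 (by rw [hηp_coord i x, if_neg hnotin])
    have m2 : f x = j := by
      by_contra hm
      have hnotin : x ∉ Finset.filter (fun y => f y = j) F :=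
        fun hmem => hm (Finset.mem_filter.mp hmem).2
      exact h2 (by rw [hηp_coord j x, if_neg hnotin])
    exact hij (by rw [← m1, ← m2])
  have hpyth1 : ‖A (∑ i ∈ J, ηp i)‖ ^ 2 = ∑ i ∈ J, ‖A (ηp i)‖ ^ 2 := by
    rw [map_sum]
    exact norm_sq_sum_of_orthogonal _ J horthA
  have hpyth2 : ∑ i ∈ I, ‖ηp i‖ ^ 2 = ‖η‖ ^ 2 := by
    rw [← hη_eq]
    exact (norm_sq_sum_of_orthogonal _ I horthη).symm
  have hJsub_sq : ∑ i ∈ J, ‖ηp i‖ ^ 2 ≤ ‖η‖ ^ 2 := by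
    rw [← hpyth2]
    exact Finset.sum_le_sum_of_subset_of_nonneg hJI (fun i _ _ => sq_nonneg _)
  have hSJ : (‖A η‖ / 2) ^ 2 ≤ ∑ i ∈ J, ‖A (ηp i)‖ ^ 2 := by
    rw [← hpyth1]
    exact pow_le_pow_left₀ (by positivity) hJbig 2
  -- extract a good piece
  obtain ⟨i, hiJ, hi_ne, hi_ineq⟩ :
      ∃ i ∈ J, ηp i ≠ 0 ∧ ‖A η‖ * ‖ηp i‖ ≤ 2 * ‖η‖ * ‖A (ηp i)‖ := by
    by_contra hcon
    push_neg at hcon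
    by_cases hz : ∀ i ∈ J, ηp i = 0
    · have h0 : (∑ i ∈ J, ηp i) = 0 := Finset.sum_eq_zero hz
      rw [h0] at hJbig
      simp only [map_zero, norm_zero] at hJbig
      linarith
    · push_neg at hz
      obtain ⟨i₀, hi₀J, hi₀⟩ := hz
      have hterm : ∀ i ∈ J, (2 * ‖η‖ * ‖A (ηp i)‖) ^ 2 ≤ (‖A η‖ * ‖ηp i‖) ^ 2 := by
        intro i hi
        rcases eq_or_ne (ηp i) 0 with h | h
        · rw [h]; simp
        · exact pow_le_pow_left₀ (by positivity) (hcon i hi h).le 2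
      have hstrict : (2 * ‖η‖ * ‖A (ηp i₀)‖) ^ 2 < (‖A η‖ * ‖ηp i₀‖) ^ 2 := by
        have hlt := hcon i₀ hi₀J hi₀
        have hb : 0 ≤ 2 * ‖η‖ * ‖A (ηp i₀)‖ := by positivity
        nlinarith
      have hs1 : ∑ i ∈ J, (2 * ‖η‖ * ‖A (ηp i)‖) ^ 2 < ∑ i ∈ J, (‖A η‖ * ‖ηp i‖) ^ 2 :=
        Finset.sum_lt_sum hterm ⟨i₀, hi₀J, hstrict⟩
      have e1 : ∑ i ∈ J, (2 * ‖η‖ * ‖A (ηp i)‖) ^ 2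
          = (2 * ‖η‖) ^ 2 * ∑ i ∈ J, ‖A (ηp i)‖ ^ 2 := by
        rw [Finset.mul_sum]
        exact Finset.sum_congr rfl fun i _ => by ring
      have e2 : ∑ i ∈ J, (‖A η‖ * ‖ηp i‖) ^ 2 = ‖A η‖ ^ 2 * ∑ i ∈ J, ‖ηp i‖ ^ 2 := by
        rw [Finset.mul_sum]
        exact Finset.sum_congr rfl fun i _ => by ring
      rw [e1, e2] at hs1
      have hge : (2 * ‖η‖) ^ 2 * ((‖A η‖ / 2) ^ 2) ≤ (2 * ‖η‖) ^ 2 * ∑ i ∈ J, ‖A (ηp i)‖ ^ 2 :=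
        mul_le_mul_of_nonneg_left hSJ (by positivity)
      have hle2 : ‖A η‖ ^ 2 * ∑ i ∈ J, ‖ηp i‖ ^ 2 ≤ ‖A η‖ ^ 2 * ‖η‖ ^ 2 :=
        mul_le_mul_of_nonneg_left hJsub_sq (by positivity)
      have hidd : (2 * ‖η‖) ^ 2 * ((‖A η‖ / 2) ^ 2) = ‖A η‖ ^ 2 * ‖η‖ ^ 2 := by ring
      linarith
  have hηpi_pos : 0 < ‖ηp i‖ := norm_pos_iff.mpr hi_ne
  have hAηpi : 1/4 * ‖A‖ * ‖ηp i‖ ≤ ‖A (ηp i)‖ := by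
    have h1 : (1/2 * ‖A‖ * ‖η‖) * ‖ηp i‖ ≤ ‖A η‖ * ‖ηp i‖ :=
      mul_le_mul_of_nonneg_right hkey (norm_nonneg _)
    have h2 : 2 * ‖η‖ * (1/4 * ‖A‖ * ‖ηp i‖) ≤ 2 * ‖η‖ * ‖A (ηp i)‖ := by
      have e3 : 2 * ‖η‖ * (1/4 * ‖A‖ * ‖ηp i‖) = (1/2 * ‖A‖ * ‖η‖) * ‖ηp i‖ := by ring
      linarith
    exact le_of_mul_le_mul_left h2 (by positivity)
  refine ⟨((‖ηp i‖⁻¹ : ℝ) : ℂ) • ηp i, ?_, ?_, ?_⟩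
  · rw [norm_smul, Complex.norm_real, Real.norm_eq_abs,
      abs_of_nonneg (inv_nonneg.mpr (norm_nonneg _))]
    exact inv_mul_cancel₀ (ne_of_gt hηpi_pos)
  · intro z w hz hw
    have hz1 : ηp i z ≠ 0 := by
      intro h0
      apply hz
      rw [lp.coeFn_smul, Pi.smul_apply, h0, smul_zero]
    have hw1 : ηp i w ≠ 0 := by
      intro h0
      apply hw
      rw [lp.coeFn_smul, Pi.smul_apply, h0, smul_zero]
    have m1 : f z = i := by
      by_contra hm
      have hnotin : z ∉ Finset.filter (fun y => f y = i) F :=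
        fun hmem => hm (Finset.mem_filter.mp hmem).2
      exact hz1 (by rw [hηp_coord i z, if_neg hnotin])
    have m2 : f w = i := by
      by_contra hm
      have hnotin : w ∉ Finset.filter (fun y => f y = i) F :=
        fun hmem => hm (Finset.mem_filter.mp hmem).2
      exact hw1 (by rw [hηp_coord i w, if_neg hnotin])
    rw [hf_def] at m1 m2
    have hdz := piece_diam hT r₀ (by omega : 1 ≤ r) (v := z) (w := w) (by rw [m1, m2])
    show ((G.dist z w : ℕ) : ℝ) ≤ _
    exact_mod_cast hdz
  · rw [map_smul, norm_smul, Complex.norm_real, Real.norm_eq_abs,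
      abs_of_nonneg (inv_nonneg.mpr (norm_nonneg _))]
    have e4 : ‖ηp i‖⁻¹ * ‖A (ηp i)‖ = ‖A (ηp i)‖ / ‖ηp i‖ := by ring
    rw [e4, le_div_iff₀ hηpi_pos]
    calc 1/4 * ‖A‖ * ‖ηp i‖ ≤ ‖A (ηp i)‖ := hAηpi
      _ = ‖A (ηp i)‖ := rfl


end
end

section
/- Let X be a uniformly discrete metric space with bounded geometry and let Γ be a countable group acting freely on X by isometries with finitely many orbits; let D ⊆ X be a (necessarily finite) set containing exactly one point of each orbit. For T ∈ ℂ[X]^Γ and g ∈ Γ let T^{(g)} be the D×D matrix with entries (T^{(g)})_{x,y} = T_{x, g·y} (x,y ∈ D), which are compact operators on H₀. Then only finitely many T^{(g)} are nonzero, and the map ψ_D : T ↦ Σ_{g∈Γ} u_g ⊗ T^{(g)} is a *-algebra isomorphism from ℂ[X]^Γ onto ℂ[Γ] ⊗ M_D(K(H₀)), the algebraic tensor product of the complex group algebra of Γ and the *-algebra of D×D matrices with entries compact operators on H₀, where the star on the tensor product is determined by (u_g ⊗ k)* = u_{g⁻¹} ⊗ k*. -/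
noncomputable section

open scoped ENNReal

namespace RoeProof
open Roe

variable {Y H : Type*} [NormedAddCommGroup H] [InnerProductSpace ℂ H]

lemma entry_apply [inst : DecidableEq Y] (T : L2 Y H →L[ℂ] L2 Y H) (x y : Y) (v : H) :
    entry T x y v = T (lp.single 2 y v) x := by
  obtain rfl : Classical.decEq Y = inst := Subsingleton.elim _ _
  rfl

lemma entry_add (T₁ T₂ : L2 Y H →L[ℂ] L2 Y H) (x y : Y) :
    entry (T₁ + T₂) x y = entry T₁ x y + entry T₂ x y := by
  classical
  ext v
  simp only [entry_apply, ContinuousLinearMap.add_apply, lp.coeFn_add, Pi.add_apply]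

lemma entry_smul (a : ℂ) (T : L2 Y H →L[ℂ] L2 Y H) (x y : Y) :
    entry (a • T) x y = a • entry T x y := by
  classical
  ext v
  simp only [entry_apply, ContinuousLinearMap.smul_apply, lp.coeFn_smul, Pi.smul_apply]

lemma entry_zero (x y : Y) : entry (0 : L2 Y H →L[ℂ] L2 Y H) x y = 0 := by
  classical
  ext v
  simp only [entry_apply, ContinuousLinearMap.zero_apply]
  exact congrFun (lp.coeFn_zero _ _) x

lemma entry_sub (T₁ T₂ : L2 Y H →L[ℂ] L2 Y H) (x y : Y) :
    entry (T₁ - T₂) x y = entry T₁ x y - entry T₂ x y := by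
  classical
  ext v
  simp only [entry_apply, ContinuousLinearMap.sub_apply, lp.coeFn_sub, Pi.sub_apply]

lemma entry_sum {ι : Type*} (s : Finset ι) (T : ι → (L2 Y H →L[ℂ] L2 Y H)) (x y : Y) :
    entry (∑ i ∈ s, T i) x y = ∑ i ∈ s, entry (T i) x y := by
  classical
  induction s using Finset.induction_on with
  | empty => simp [entry_zero]
  | insert _ _ h ih => simp [Finset.sum_insert h, entry_add, ih]

lemma eq_sum_single [DecidableEq Y] (ξ : L2 Y H) (s : Finset Y) (hs : ∀ y ∉ s, ξ y = 0) :
    ξ = ∑ y ∈ s, lp.single 2 y (ξ y) := by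
  apply lp.ext
  funext j
  rw [lp.coeFn_sum, Finset.sum_apply]
  by_cases hj : j ∈ s
  · simp [lp.single_apply, eq_rec_constant, Finset.sum_dite_eq', hj]
  · simp [lp.single_apply, eq_rec_constant, Finset.sum_dite_eq', hj, hs j hj]

lemma entry_comp [DecidableEq Y] (T₁ T₂ : L2 Y H →L[ℂ] L2 Y H) (x z : Y) (s : Finset Y)
    (hs : ∀ y ∉ s, entry T₂ y z = 0) :
    entry (T₁ ∘L T₂) x z = ∑ y ∈ s, entry T₁ x y * entry T₂ y z := by
  ext v
  have h2 : T₂ (lp.single 2 z v) = ∑ y ∈ s, lp.single 2 y ((T₂ (lp.single 2 z v)) y) :=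
    eq_sum_single _ s fun y hy => by
      rw [← entry_apply, hs y hy]; rfl
  have h0 : entry (T₁ ∘L T₂) x z v = T₁ (T₂ (lp.single 2 z v)) x := entry_apply ..
  rw [h0, h2, map_sum, lp.coeFn_sum, Finset.sum_apply, ContinuousLinearMap.sum_apply]
  refine Finset.sum_congr rfl fun y _ => ?_
  simp only [ContinuousLinearMap.mul_apply, ← entry_apply]

section Adjoint
variable {Y H : Type*} [NormedAddCommGroup H] [InnerProductSpace ℂ H] [CompleteSpace H]

open scoped InnerProductSpace in
lemma entry_adjoint (T : L2 Y H →L[ℂ] L2 Y H) (x y : Y) :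
    entry (ContinuousLinearMap.adjoint T) x y
      = ContinuousLinearMap.adjoint (entry T y x) := by
  classical
  ext v
  refine ext_inner_left ℂ fun w => ?_
  have h1 : (⟪w, entry (ContinuousLinearMap.adjoint T) x y v⟫_ℂ)
      = ⟪lp.single 2 x w, (ContinuousLinearMap.adjoint T) (lp.single 2 y v)⟫_ℂ := by
    rw [entry_apply, lp.inner_single_left]
  rw [h1, ContinuousLinearMap.adjoint_inner_right, lp.inner_single_right,
    ← entry_apply, ContinuousLinearMap.adjoint_inner_right]

open scoped InnerProductSpace in
lemma eq_zero_of_entries (T : L2 Y H →L[ℂ] L2 Y H)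
    (h : ∀ x y : Y, entry T x y = 0) : T = 0 := by
  classical
  have hadj : ∀ (x : Y) (w : H),
      (ContinuousLinearMap.adjoint T) (lp.single 2 x w) = 0 := by
    intro x w
    apply lp.ext
    funext yy
    have : ((ContinuousLinearMap.adjoint T) (lp.single 2 x w)) yy
        = entry (ContinuousLinearMap.adjoint T) yy x w := (entry_apply ..).symm
    rw [this, entry_adjoint, h]
    simp only [map_zero, ContinuousLinearMap.zero_apply]
    exact (congrFun (lp.coeFn_zero (fun _ : Y => H) 2) yy).symm
  ext ξ x
  have hz : (T ξ) x = 0 := by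
    refine ext_inner_right ℂ fun w => ?_
    have h1 : (⟪(T ξ) x, w⟫_ℂ) = ⟪T ξ, lp.single 2 x w⟫_ℂ :=
      (lp.inner_single_right (𝕜 := ℂ) (G := fun _ : Y => H) x w (T ξ)).symm
    rw [h1, ← ContinuousLinearMap.adjoint_inner_right, hadj]
    simp
  simp [hz]

end Adjoint

section Op
variable {Y H : Type*} [NormedAddCommGroup H] [InnerProductSpace ℂ H]

lemma exists_op [DecidableEq Y] (a : Y → (H →L[ℂ] H)) (C : ℝ) (hC : 0 ≤ C)
    (ha : ∀ x, ‖a x‖ ≤ C) (σ : Y → Y) (hinj : Set.InjOn σ {x | a x ≠ 0}) :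
    ∃ T : L2 Y H →L[ℂ] L2 Y H,
      ∀ x y : Y, entry T x y = if σ x = y then a x else 0 := by
  have hq : (0:ℝ) < (2:ℝ≥0∞).toReal := by norm_num
  set q := (2:ℝ≥0∞).toReal with hqdef
  have hsum0 : ∀ ξ : L2 Y H, Summable fun y => ‖ξ y‖ ^ q :=
    fun ξ => (lp.memℓp ξ).summable hq
  have hinj' : Function.Injective (fun x : {x | a x ≠ 0} => σ (x : Y)) :=
    Set.injOn_iff_injective.mp hinj
  have key : ∀ ξ : L2 Y H, Summable (fun x => ‖a x (ξ (σ x))‖ ^ q) ∧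
      ∑' x, ‖a x (ξ (σ x))‖ ^ q ≤ C ^ q * ∑' y, ‖ξ y‖ ^ q := by
    intro ξ
    set S : Set Y := {x | a x ≠ 0} with hSdef
    have hS : Summable (fun x : S => ‖ξ (σ x)‖ ^ q) :=
      (hsum0 ξ).comp_injective hinj'
    have hInd : Summable (S.indicator (fun x => ‖ξ (σ x)‖ ^ q)) :=
      summable_subtype_iff_indicator.mp hS
    have hle : ∀ x, ‖a x (ξ (σ x))‖ ^ q
        ≤ C ^ q * S.indicator (fun x => ‖ξ (σ x)‖ ^ q) x := by
      intro x
      by_cases hx : x ∈ S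
      · rw [Set.indicator_of_mem hx]
        calc ‖a x (ξ (σ x))‖ ^ q ≤ (C * ‖ξ (σ x)‖) ^ q := by
              refine Real.rpow_le_rpow (norm_nonneg _) ?_ hq.le
              exact le_trans ((a x).le_opNorm _)
                (mul_le_mul_of_nonneg_right (ha x) (norm_nonneg _))
          _ = C ^ q * ‖ξ (σ x)‖ ^ q := Real.mul_rpow hC (norm_nonneg _)
      · rw [Set.indicator_of_notMem hx]
        have hax : a x = 0 := not_not.mp hx
        simp [hax, Real.zero_rpow hq.ne']
    have hsummand : Summable (fun x => ‖a x (ξ (σ x))‖ ^ q) :=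
      Summable.of_nonneg_of_le (fun x => Real.rpow_nonneg (norm_nonneg _) q) hle
        (hInd.mul_left _)
    refine ⟨hsummand, ?_⟩
    calc ∑' x, ‖a x (ξ (σ x))‖ ^ q
        ≤ ∑' x, C ^ q * S.indicator (fun x => ‖ξ (σ x)‖ ^ q) x :=
          Summable.tsum_le_tsum hle hsummand (hInd.mul_left _)
      _ = C ^ q * ∑' x, S.indicator (fun x => ‖ξ (σ x)‖ ^ q) x := tsum_mul_left
      _ ≤ C ^ q * ∑' y, ‖ξ y‖ ^ q := by
          refine mul_le_mul_of_nonneg_left ?_ (Real.rpow_nonneg hC q)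
          rw [← tsum_subtype]
          exact Summable.tsum_le_tsum_of_inj (fun x : S => σ (x : Y)) hinj'
            (fun y _ => Real.rpow_nonneg (norm_nonneg _) q) (fun x => le_rfl) hS (hsum0 ξ)
  have hmem : ∀ ξ : L2 Y H, Memℓp (fun x => a x (ξ (σ x))) 2 :=
    fun ξ => memℓp_gen (key ξ).1
  let L : L2 Y H →ₗ[ℂ] L2 Y H :=
    { toFun := fun ξ => ⟨fun x => a x (ξ (σ x)), hmem ξ⟩
      map_add' := by
        intro ξ η
        apply lp.ext
        funext x
        show a x ((ξ + η) (σ x)) = _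
        rw [lp.coeFn_add, Pi.add_apply, map_add, lp.coeFn_add, Pi.add_apply]
      map_smul' := by
        intro c ξ
        apply lp.ext
        funext x
        show a x ((c • ξ) (σ x)) = _
        rw [lp.coeFn_smul, Pi.smul_apply, map_smul, RingHom.id_apply, lp.coeFn_smul,
          Pi.smul_apply] }
  have hbound : ∀ ξ : L2 Y H, ‖L ξ‖ ≤ C * ‖ξ‖ := by
    intro ξ
    have h1 : ‖L ξ‖ ^ q = ∑' x, ‖a x (ξ (σ x))‖ ^ q := lp.norm_rpow_eq_tsum hq (L ξ)
    have h2 : ‖ξ‖ ^ q = ∑' y, ‖ξ y‖ ^ q := lp.norm_rpow_eq_tsum hq ξ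
    have h3 : ‖L ξ‖ ^ q ≤ (C * ‖ξ‖) ^ q := by
      rw [h1, Real.mul_rpow hC (norm_nonneg _), h2]
      exact (key ξ).2
    exact (Real.rpow_le_rpow_iff (norm_nonneg _) (mul_nonneg hC (norm_nonneg _)) hq).mp h3
  refine ⟨LinearMap.mkContinuous L C hbound, ?_⟩
  intro x y
  ext v
  have happ : entry (LinearMap.mkContinuous L C hbound) x y v
      = a x ((lp.single 2 y v : L2 Y H) (σ x)) := entry_apply ..
  rw [happ]
  by_cases hxy : σ x = y
  · rw [if_pos hxy, hxy, lp.single_apply_self]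
  · rw [if_neg hxy, lp.single_apply_ne (E := fun _ : Y => H) 2 y v hxy, map_zero,
      ContinuousLinearMap.zero_apply]

end Op

end RoeProof
/-- The coefficient map `ψ_D`: to an equivariant operator `T` it assigns, for each `g ∈ Γ`,
the `D × D` matrix `T^{(g)}` with entries `(T^{(g)})_{x,y} = T_{x, g·y}`, so that
`ψ_D(T) = Σ_g u_g ⊗ T^{(g)}`. -/
def psiD {H₀ X Γ : Type} [NormedAddCommGroup H₀] [InnerProductSpace ℂ H₀]
    [Group Γ] [MulAction Γ X] (D : Set X)
    (T : L2 X H₀ →L[ℂ] L2 X H₀) (g : Γ) : Matrix ↥D ↥D (H₀ →L[ℂ] H₀) :=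
  fun x y => Roe.entry T (x : X) (g • (y : X))

/-- for a free isometric action of a countable group `Γ` with finitely many
orbits on a uniformly discrete bounded geometry space `X`, the map `ψ_D` is a *-algebra
isomorphism of `ℂ[X]^Γ` onto `ℂ[Γ] ⊗ M_D(K(H₀))`, i.e. onto the finitely supported
`Γ`-indexed families of `D × D` matrices of compact operators, with convolution product
and the star determined by `(u_g ⊗ k)* = u_{g⁻¹} ⊗ k*`. -/
theorem psiD_star_algebra_isomorphism
    (H₀ : Type) [NormedAddCommGroup H₀] [InnerProductSpace ℂ H₀] [CompleteSpace H₀]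
    [TopologicalSpace.SeparableSpace H₀] (hinf : ¬ FiniteDimensional ℂ H₀)
    (X : Type) [MetricSpace X]
    (hud : ∃ δ : ℝ, 0 < δ ∧ ∀ x y : X, x ≠ y → δ ≤ dist x y)
    (hbg : ∀ r : ℝ, ∃ N : ℕ, ∀ x : X, (Metric.ball x r).Finite ∧ (Metric.ball x r).ncard ≤ N)
    (Γ : Type) [Group Γ] [Countable Γ] [MulAction Γ X]
    (hiso : ∀ (γ : Γ) (x y : X), dist (γ • x) (γ • y) = dist x y)
    (hfree : ∀ (γ : Γ) (x : X), γ • x = x → γ = 1)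
    (D : Set X) [Fintype ↥D]
    (hD : ∀ x : X, ∃! d : X, d ∈ D ∧ ∃ γ : Γ, γ • x = d) :
    -- ψ_D takes values in finitely supported families of matrices of compact operators
    (∀ T : L2 X H₀ →L[ℂ] L2 X H₀,
      Roe.LocallyCompact (fun x y : X => dist x y) T →
      (∃ R : ℝ, Roe.PropagationLE (fun x y : X => dist x y) T R) →
      (∀ (γ : Γ) (x y : X), Roe.entry T (γ • x) (γ • y) = Roe.entry T x y) →
      {g : Γ | psiD (Γ := Γ) D T g ≠ 0}.Finite ∧
        ∀ (g : Γ) (x y : ↥D), IsCompactOperator (psiD (Γ := Γ) D T g x y)) ∧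
    -- ψ_D is additive
    (∀ T₁ T₂ : L2 X H₀ →L[ℂ] L2 X H₀,
      Roe.LocallyCompact (fun x y : X => dist x y) T₁ →
      (∃ R : ℝ, Roe.PropagationLE (fun x y : X => dist x y) T₁ R) →
      (∀ (γ : Γ) (x y : X), Roe.entry T₁ (γ • x) (γ • y) = Roe.entry T₁ x y) →
      Roe.LocallyCompact (fun x y : X => dist x y) T₂ →
      (∃ R : ℝ, Roe.PropagationLE (fun x y : X => dist x y) T₂ R) →
      (∀ (γ : Γ) (x y : X), Roe.entry T₂ (γ • x) (γ • y) = Roe.entry T₂ x y) →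
      psiD (Γ := Γ) D (T₁ + T₂) = fun g : Γ => psiD (Γ := Γ) D T₁ g + psiD (Γ := Γ) D T₂ g) ∧
    -- ψ_D respects scalar multiplication
    (∀ (T : L2 X H₀ →L[ℂ] L2 X H₀) (a : ℂ),
      Roe.LocallyCompact (fun x y : X => dist x y) T →
      (∃ R : ℝ, Roe.PropagationLE (fun x y : X => dist x y) T R) →
      (∀ (γ : Γ) (x y : X), Roe.entry T (γ • x) (γ • y) = Roe.entry T x y) →
      psiD (Γ := Γ) D (a • T) = fun g : Γ => a • psiD (Γ := Γ) D T g) ∧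
    -- ψ_D is multiplicative for the convolution product
    (∀ T₁ T₂ : L2 X H₀ →L[ℂ] L2 X H₀,
      Roe.LocallyCompact (fun x y : X => dist x y) T₁ →
      (∃ R : ℝ, Roe.PropagationLE (fun x y : X => dist x y) T₁ R) →
      (∀ (γ : Γ) (x y : X), Roe.entry T₁ (γ • x) (γ • y) = Roe.entry T₁ x y) →
      Roe.LocallyCompact (fun x y : X => dist x y) T₂ →
      (∃ R : ℝ, Roe.PropagationLE (fun x y : X => dist x y) T₂ R) →
      (∀ (γ : Γ) (x y : X), Roe.entry T₂ (γ • x) (γ • y) = Roe.entry T₂ x y) →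
      ∀ g : Γ, psiD (Γ := Γ) D (T₁ ∘L T₂) g = ∑ᶠ h : Γ, psiD (Γ := Γ) D T₁ h * psiD (Γ := Γ) D T₂ (h⁻¹ * g)) ∧
    -- ψ_D is a *-map: ψ_D(T*)(g) = (ψ_D(T)(g⁻¹))*
    (∀ T : L2 X H₀ →L[ℂ] L2 X H₀,
      Roe.LocallyCompact (fun x y : X => dist x y) T →
      (∃ R : ℝ, Roe.PropagationLE (fun x y : X => dist x y) T R) →
      (∀ (γ : Γ) (x y : X), Roe.entry T (γ • x) (γ • y) = Roe.entry T x y) →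
      ∀ g : Γ, psiD (Γ := Γ) D (ContinuousLinearMap.adjoint T) g =
        (psiD (Γ := Γ) D T g⁻¹).conjTranspose) ∧
    -- ψ_D is injective on ℂ[X]^Γ
    (∀ T₁ T₂ : L2 X H₀ →L[ℂ] L2 X H₀,
      Roe.LocallyCompact (fun x y : X => dist x y) T₁ →
      (∃ R : ℝ, Roe.PropagationLE (fun x y : X => dist x y) T₁ R) →
      (∀ (γ : Γ) (x y : X), Roe.entry T₁ (γ • x) (γ • y) = Roe.entry T₁ x y) →
      Roe.LocallyCompact (fun x y : X => dist x y) T₂ →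
      (∃ R : ℝ, Roe.PropagationLE (fun x y : X => dist x y) T₂ R) →
      (∀ (γ : Γ) (x y : X), Roe.entry T₂ (γ • x) (γ • y) = Roe.entry T₂ x y) →
      psiD (Γ := Γ) D T₁ = psiD (Γ := Γ) D T₂ → T₁ = T₂) ∧
    -- ψ_D is surjective onto ℂ[Γ] ⊗ M_D(K(H₀))
    (∀ f : Γ → Matrix ↥D ↥D (H₀ →L[ℂ] H₀),
      {g : Γ | f g ≠ 0}.Finite →
      (∀ (g : Γ) (x y : ↥D), IsCompactOperator (f g x y)) →
      ∃ T : L2 X H₀ →L[ℂ] L2 X H₀,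
        Roe.LocallyCompact (fun x y : X => dist x y) T ∧
        (∃ R : ℝ, Roe.PropagationLE (fun x y : X => dist x y) T R) ∧
        (∀ (γ : Γ) (x y : X), Roe.entry T (γ • x) (γ • y) = Roe.entry T x y) ∧
        psiD (Γ := Γ) D T = f) := by
  classical
  have uniq : ∀ (g g' : Γ) (d d' : ↥D), g • (d : X) = g' • (d' : X) → g = g' ∧ d = d' := by
    intro g g' d d' h
    have hd' : (g'⁻¹ * g) • (d : X) = (d' : X) := by rw [mul_smul, h, inv_smul_smul]
    obtain ⟨d₀, hd₀, hu⟩ := hD (d : X)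
    have h1 : (d : X) = d₀ := hu (d : X) ⟨d.2, 1, one_smul _ _⟩
    have h2 : (d' : X) = d₀ := hu (d' : X) ⟨d'.2, g'⁻¹ * g, hd'⟩
    have hdd : d = d' := Subtype.ext (h1.trans h2.symm)
    subst hdd
    have hfix : (g'⁻¹ * g) • (d : X) = (d : X) := hd'
    exact ⟨(inv_mul_eq_one.mp (hfree _ _ hfix)).symm, rfl⟩
  have hrepE : ∀ x : X, ∃ p : Γ × ↥D, p.1 • ((p.2 : ↥D) : X) = x := by
    intro x
    obtain ⟨d, ⟨hdD, γ, hγ⟩, -⟩ := hD x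
    refine ⟨(γ⁻¹, ⟨d, hdD⟩), ?_⟩
    show γ⁻¹ • d = x
    rw [← hγ, inv_smul_smul]
  choose rep hrep using hrepE
  have rep_smul : ∀ (γ : Γ) (x : X), rep (γ • x) = (γ * (rep x).1, (rep x).2) := by
    intro γ x
    have h1 : (rep (γ • x)).1 • ((rep (γ • x)).2 : X)
        = (γ * (rep x).1) • ((rep x).2 : X) := by
      rw [hrep, mul_smul, hrep]
    obtain ⟨h2, h3⟩ := uniq _ _ _ _ h1
    exact Prod.ext h2 h3
  have rep_d : ∀ d : ↥D, rep (d : X) = (1, d) := by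
    intro d
    have h1 : (rep (d : X)).1 • ((rep (d : X)).2 : X) = (1 : Γ) • (d : X) := by
      rw [hrep, one_smul]
    obtain ⟨h2, h3⟩ := uniq _ _ _ _ h1
    exact Prod.ext h2 h3
  have hBfin : ∀ B : Set X, Roe.DBounded (fun x y : X => dist x y) B → B.Finite := by
    rintro B ⟨C, hC⟩
    rcases Set.eq_empty_or_nonempty B with h | ⟨x₀, hx₀⟩
    · simp [h]
    obtain ⟨N, hN⟩ := hbg (C + 1)
    refine ((hN x₀).1).subset fun x hx => ?_
    have := hC x hx x₀ hx₀
    exact Metric.mem_ball.mpr (by linarith)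
  have hBddPairs : ∀ T : L2 X H₀ →L[ℂ] L2 X H₀, ∀ B : Set X,
      Roe.DBounded (fun x y : X => dist x y) B →
      {p : X × X | p.1 ∈ B ∧ p.2 ∈ B ∧ Roe.entry T p.1 p.2 ≠ 0}.Finite := by
    intro T B hB
    exact ((hBfin B hB).prod (hBfin B hB)).subset fun p hp => ⟨hp.1, hp.2.1⟩
  have key1 : ∀ T : L2 X H₀ →L[ℂ] L2 X H₀,
      Roe.LocallyCompact (fun x y : X => dist x y) T →
      (∃ R : ℝ, Roe.PropagationLE (fun x y : X => dist x y) T R) →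
      (∀ (γ : Γ) (x y : X), Roe.entry T (γ • x) (γ • y) = Roe.entry T x y) →
      {g : Γ | psiD (Γ := Γ) D T g ≠ 0}.Finite ∧
        ∀ (g : Γ) (x y : ↥D), IsCompactOperator (psiD (Γ := Γ) D T g x y) := by
    rintro T hlc ⟨R, hR⟩ -
    constructor
    · have hsub : {g : Γ | psiD (Γ := Γ) D T g ≠ 0} ⊆
          ⋃ (x : ↥D) (y : ↥D), (fun g : Γ => g • (y : X)) ⁻¹' Metric.ball (x : X) (R + 1) := by
        intro g hg
        have hne : ∃ x y : ↥D, Roe.entry T (x : X) (g • (y : X)) ≠ 0 := by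
          by_contra hcon
          push_neg at hcon
          exact hg (funext fun x => funext fun y => hcon x y)
        obtain ⟨x, y, hxy⟩ := hne
        have hdist : dist (x : X) (g • (y : X)) ≤ R := by
          by_contra hlt
          exact hxy (hR _ _ (lt_of_not_ge hlt))
        refine Set.mem_iUnion.mpr ⟨x, Set.mem_iUnion.mpr ⟨y, ?_⟩⟩
        simp only [Set.mem_preimage, Metric.mem_ball]
        rw [dist_comm]
        linarith
      refine Set.Finite.subset ?_ hsub
      refine Set.finite_iUnion fun x => Set.finite_iUnion fun y => ?_
      obtain ⟨N, hN⟩ := hbg (R + 1)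
      refine Set.Finite.preimage ?_ ((hN (x : X)).1)
      intro g _ g' _ hgg'
      have hgg2 : g • (y : X) = g' • (y : X) := hgg'
      have hfix : (g'⁻¹ * g) • (y : X) = (y : X) := by
        rw [mul_smul, hgg2, inv_smul_smul]
      exact (inv_mul_eq_one.mp (hfree _ _ hfix)).symm
    · intro g x y
      exact hlc.1 (x : X) (g • (y : X))
  refine ⟨key1, ?_, ?_, ?_, ?_, ?_, ?_⟩
  · -- additivity
    intro T₁ T₂ _ _ _ _ _ _
    funext g
    funext x y
    exact RoeProof.entry_add T₁ T₂ (x : X) (g • (y : X))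
  · -- scalar multiplication
    intro T a _ _ _
    funext g
    funext x y
    exact RoeProof.entry_smul a T (x : X) (g • (y : X))
  · -- multiplicativity
    intro T₁ T₂ hlc1 hprop1 hequiv1 hlc2 hprop2 hequiv2 g
    obtain ⟨R₂, hR₂⟩ := hprop2
    have hfin1 : {h : Γ | psiD (Γ := Γ) D T₁ h ≠ 0}.Finite :=
      (key1 T₁ hlc1 hprop1 hequiv1).1
    have hMsupp : (Function.support fun h : Γ =>
        psiD (Γ := Γ) D T₁ h * psiD (Γ := Γ) D T₂ (h⁻¹ * g)) ⊆ ↑hfin1.toFinset := by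
      intro h hh
      simp only [Function.mem_support] at hh
      simp only [Set.Finite.coe_toFinset, Set.mem_setOf_eq]
      intro h0
      exact hh (by rw [h0, Matrix.zero_mul])
    rw [finsum_eq_sum_of_support_subset _ hMsupp]
    funext x y
    set z : X := g • (y : X) with hzdef
    have hS₂ : {p : X | Roe.entry T₂ p z ≠ 0}.Finite := by
      obtain ⟨N, hN⟩ := hbg (R₂ + 1)
      refine ((hN z).1).subset fun p hp => ?_
      have hd : dist p z ≤ R₂ := by
        by_contra hlt
        exact hp (hR₂ _ _ (lt_of_not_ge hlt))
      exact Metric.mem_ball.mpr (by linarith)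
    set Fh : Finset Γ := hfin1.toFinset ∪ hS₂.toFinset.image (fun p => (rep p).1) with hFhdef
    set ι : Γ × ↥D → X := fun p => p.1 • ((p.2 : ↥D) : X) with hιdef
    have hcover : ∀ p : X, p ∉ (Fh ×ˢ (Finset.univ : Finset ↥D)).image ι →
        Roe.entry T₂ p z = 0 := by
      intro p hp
      by_contra hne
      refine hp (Finset.mem_image.mpr ⟨rep p, ?_, hrep p⟩)
      refine Finset.mem_product.mpr ⟨?_, Finset.mem_univ _⟩
      exact Finset.mem_union_right _
        (Finset.mem_image.mpr ⟨p, hS₂.mem_toFinset.mpr hne, rfl⟩)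
    have hιinj : ∀ p₁ ∈ Fh ×ˢ (Finset.univ : Finset ↥D),
        ∀ p₂ ∈ Fh ×ˢ (Finset.univ : Finset ↥D), ι p₁ = ι p₂ → p₁ = p₂ := by
      intro p₁ _ p₂ _ hp
      obtain ⟨h1, h2⟩ := uniq _ _ _ _ hp
      exact Prod.ext h1 h2
    have hL : Roe.entry (T₁ ∘L T₂) (x : X) z
        = ∑ p ∈ Fh ×ˢ (Finset.univ : Finset ↥D),
            Roe.entry T₁ (x : X) (ι p) * Roe.entry T₂ (ι p) z := by
      rw [RoeProof.entry_comp T₁ T₂ (x : X) z _ hcover, Finset.sum_image hιinj]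
    have hbridge : ∑ h ∈ hfin1.toFinset, (∑ w : ↥D,
            Roe.entry T₁ (x : X) (ι (h, w)) * Roe.entry T₂ (ι (h, w)) z)
        = ∑ h ∈ Fh, (∑ w : ↥D,
            Roe.entry T₁ (x : X) (ι (h, w)) * Roe.entry T₂ (ι (h, w)) z) := by
      refine Finset.sum_subset Finset.subset_union_left fun h _ hnot => ?_
      refine Finset.sum_eq_zero fun w _ => ?_
      have h0 : psiD (Γ := Γ) D T₁ h = 0 := by
        by_contra hne
        exact hnot (hfin1.mem_toFinset.mpr hne)
      have h1 : Roe.entry T₁ (x : X) (h • (w : X)) = 0 := congrFun (congrFun h0 x) w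
      show Roe.entry T₁ (x : X) (h • (w : X)) * Roe.entry T₂ (ι (h, w)) z = 0
      rw [h1, zero_mul]
    show Roe.entry (T₁ ∘L T₂) (x : X) z = _
    rw [hL, Finset.sum_product, ← hbridge]
    rw [Matrix.sum_apply]
    refine Finset.sum_congr rfl fun h _ => ?_
    rw [Matrix.mul_apply]
    refine Finset.sum_congr rfl fun w _ => ?_
    have hι : ι (h, w) = h • (w : X) := by rw [hιdef]
    have hT2 : Roe.entry T₂ (h • (w : X)) z = Roe.entry T₂ (w : X) ((h⁻¹ * g) • (y : X)) := by
      have he := hequiv2 h (w : X) ((h⁻¹ * g) • (y : X))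
      have hz2 : h • ((h⁻¹ * g) • (y : X)) = z := by
        rw [smul_smul, mul_inv_cancel_left]
      rw [hz2] at he
      exact he
    rw [hι, hT2]
    rfl

  · -- star
    intro T _ _ hequiv g
    funext x y
    show Roe.entry (ContinuousLinearMap.adjoint T) (x : X) (g • (y : X))
      = star (psiD (Γ := Γ) D T g⁻¹ y x)
    rw [RoeProof.entry_adjoint]
    have h1 : Roe.entry T (g • (y : X)) (x : X)
        = Roe.entry T (y : X) (g⁻¹ • (x : X)) := by
      have := hequiv g⁻¹ (g • (y : X)) (x : X)
      rw [inv_smul_smul] at this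
      exact this.symm
    rw [h1, ContinuousLinearMap.star_eq_adjoint]
    rfl
  · -- injectivity
    intro T₁ T₂ _ _ hequiv1 _ _ hequiv2 hpsi
    have keyE : ∀ T : L2 X H₀ →L[ℂ] L2 X H₀,
        (∀ (γ : Γ) (a b : X), Roe.entry T (γ • a) (γ • b) = Roe.entry T a b) →
        ∀ x yy : X, Roe.entry T x yy
          = psiD (Γ := Γ) D T (rep (((rep x).1)⁻¹ • yy)).1 (rep x).2
              (rep (((rep x).1)⁻¹ • yy)).2 := by
      intro T h x yy
      have h0 := h (rep x).1 ((rep x).2 : X) (((rep x).1)⁻¹ • yy)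
      rw [hrep x, smul_inv_smul] at h0
      rw [h0]
      show Roe.entry T ((rep x).2 : X) (((rep x).1)⁻¹ • yy)
        = Roe.entry T ((rep x).2 : X)
            ((rep (((rep x).1)⁻¹ • yy)).1 • ((rep (((rep x).1)⁻¹ • yy)).2 : X))
      rw [hrep]
    have hent : ∀ x yy : X, Roe.entry T₁ x yy = Roe.entry T₂ x yy := by
      intro x yy
      rw [keyE T₁ hequiv1 x yy, keyE T₂ hequiv2 x yy, hpsi]
    have hsub : T₁ - T₂ = 0 :=
      RoeProof.eq_zero_of_entries _ fun x yy => by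
        rw [RoeProof.entry_sub, hent, sub_self]
    exact sub_eq_zero.mp hsub
  · -- surjectivity
    intro f hfin hcpt
    set S : Finset (Γ × ↥D × ↥D) := hfin.toFinset ×ˢ (Finset.univ : Finset (↥D × ↥D))
      with hSdef
    have hTgde : ∀ p : Γ × ↥D × ↥D, ∃ T : L2 X H₀ →L[ℂ] L2 X H₀,
        ∀ x yy : X, Roe.entry T x yy =
          if ((rep x).1 * p.1) • ((p.2.2 : ↥D) : X) = yy
          then (if (rep x).2 = p.2.1 then f p.1 p.2.1 p.2.2 else 0) else 0 := by
      intro p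
      have hinjp : Set.InjOn (fun x : X => ((rep x).1 * p.1) • ((p.2.2 : ↥D) : X))
          {x : X | (if (rep x).2 = p.2.1 then f p.1 p.2.1 p.2.2 else 0) ≠ 0} := by
        intro x₁ hx₁ x₂ hx₂ hσ
        obtain ⟨h1, -⟩ := uniq _ _ _ _ hσ
        have hg : (rep x₁).1 = (rep x₂).1 := mul_right_cancel h1
        have e₁ : (rep x₁).2 = p.2.1 := by
          by_contra hc
          exact hx₁ (if_neg hc)
        have e₂ : (rep x₂).2 = p.2.1 := by
          by_contra hc
          exact hx₂ (if_neg hc)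
        calc x₁ = (rep x₁).1 • ((rep x₁).2 : X) := (hrep x₁).symm
          _ = (rep x₂).1 • ((rep x₂).2 : X) := by rw [hg, e₁, e₂]
          _ = x₂ := hrep x₂
      obtain ⟨T, hT⟩ := RoeProof.exists_op
        (fun x : X => if (rep x).2 = p.2.1 then f p.1 p.2.1 p.2.2 else 0)
        ‖f p.1 p.2.1 p.2.2‖ (norm_nonneg _)
        (fun x => by show ‖(if (rep x).2 = p.2.1 then f p.1 p.2.1 p.2.2 else 0 : H₀ →L[ℂ] H₀)‖ ≤ ‖f p.1 p.2.1 p.2.2‖; split_ifs; exacts [le_rfl, by simp])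
        (fun x : X => ((rep x).1 * p.1) • ((p.2.2 : ↥D) : X)) hinjp
      exact ⟨T, fun x yy => hT x yy⟩
    choose Top hTop using hTgde
    set T : L2 X H₀ →L[ℂ] L2 X H₀ := ∑ p ∈ S, Top p with hTdef
    have hentry : ∀ x yy : X, Roe.entry T x yy = ∑ p ∈ S,
        (if ((rep x).1 * p.1) • ((p.2.2 : ↥D) : X) = yy
         then (if (rep x).2 = p.2.1 then f p.1 p.2.1 p.2.2 else 0) else 0) := by
      intro x yy
      rw [hTdef, RoeProof.entry_sum]
      exact Finset.sum_congr rfl fun p _ => hTop p x yy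
    refine ⟨T, ⟨?_, fun B hB => hBddPairs T B hB⟩, ?_, ?_, ?_⟩
    · -- entries compact
      intro x yy
      rw [hentry]
      have : ∀ p ∈ S, IsCompactOperator
          (⇑(if ((rep x).1 * p.1) • ((p.2.2 : ↥D) : X) = yy
             then (if (rep x).2 = p.2.1 then f p.1 p.2.1 p.2.2 else 0) else 0)) := by
        intro p _
        split_ifs with h1 h2
        · exact hcpt p.1 p.2.1 p.2.2
        · simpa using isCompactOperator_zero
        · simpa using isCompactOperator_zero
      refine Finset.sum_induction _ (fun A : H₀ →L[ℂ] H₀ => IsCompactOperator ⇑A)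
        (fun A B hA hB => by simpa using hA.add hB)
        (by simpa using isCompactOperator_zero) this
    · -- finite propagation
      refine ⟨∑ p ∈ S, dist ((p.2.1 : ↥D) : X) (p.1 • ((p.2.2 : ↥D) : X)), ?_⟩
      intro x yy hgt
      rw [hentry]
      refine Finset.sum_eq_zero fun p hp => ?_
      by_cases hcond : ((rep x).1 * p.1) • ((p.2.2 : ↥D) : X) = yy
      · by_cases hcond2 : (rep x).2 = p.2.1
        · exfalso
          have hdist : dist x yy = dist ((p.2.1 : ↥D) : X) (p.1 • ((p.2.2 : ↥D) : X)) := by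
            calc dist x yy
                = dist ((rep x).1 • ((rep x).2 : X))
                    ((rep x).1 • (p.1 • ((p.2.2 : ↥D) : X))) := by
                  rw [hrep x, ← hcond, mul_smul]
              _ = dist ((rep x).2 : X) (p.1 • ((p.2.2 : ↥D) : X)) := hiso _ _ _
              _ = _ := by rw [hcond2]
          have hle : dist ((p.2.1 : ↥D) : X) (p.1 • ((p.2.2 : ↥D) : X))
              ≤ ∑ q ∈ S, dist ((q.2.1 : ↥D) : X) (q.1 • ((q.2.2 : ↥D) : X)) :=
            Finset.single_le_sum
              (f := fun q : Γ × ↥D × ↥D => dist ((q.2.1 : ↥D) : X) (q.1 • ((q.2.2 : ↥D) : X)))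
              (fun q _ => dist_nonneg) hp
          have hgt' : (∑ q ∈ S, dist ((q.2.1 : ↥D) : X) (q.1 • ((q.2.2 : ↥D) : X)))
              < dist x yy := hgt
          rw [hdist] at hgt'
          linarith
        · rw [if_pos hcond, if_neg hcond2]
      · rw [if_neg hcond]
    · -- equivariance
      intro γ x yy
      rw [hentry, hentry]
      refine Finset.sum_congr rfl fun p _ => ?_
      simp only [rep_smul]
      have hcond : (((γ * (rep x).1) * p.1) • ((p.2.2 : ↥D) : X) = γ • yy)
          ↔ (((rep x).1 * p.1) • ((p.2.2 : ↥D) : X) = yy) := by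
        rw [mul_assoc, mul_smul]
        exact smul_left_cancel_iff γ
      by_cases h1 : ((rep x).1 * p.1) • ((p.2.2 : ↥D) : X) = yy
      · rw [if_pos (hcond.mpr h1), if_pos h1]
      · rw [if_neg (fun hc => h1 (hcond.mp hc)), if_neg h1]
    · -- psiD T = f
      funext g'
      funext x y
      show Roe.entry T (x : X) (g' • (y : X)) = f g' x y
      rw [hentry]
      have hterm : ∀ p ∈ S, p ≠ (g', x, y) →
          (if ((rep ((x : ↥D) : X)).1 * p.1) • ((p.2.2 : ↥D) : X) = g' • (y : X)
           then (if (rep ((x : ↥D) : X)).2 = p.2.1 then f p.1 p.2.1 p.2.2 else 0) else 0)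
            = 0 := by
        intro p _ hne
        split_ifs with h1 h2
        · exfalso
          simp only [rep_d, one_mul] at h1 h2
          obtain ⟨hg, he⟩ := uniq _ _ _ _ h1
          exact hne (Prod.ext hg (Prod.ext h2.symm he))
        · rfl
        · rfl
      have hlast : (g', x, y) ∉ S →
          (if ((rep ((x : ↥D) : X)).1 * g') • ((y : ↥D) : X) = g' • (y : X)
           then (if (rep ((x : ↥D) : X)).2 = x then f g' x y else 0) else 0) = 0 := by
        intro hns
        have hfg : f g' = 0 := by
          by_contra hne
          exact hns (Finset.mem_product.mpr
            ⟨hfin.mem_toFinset.mpr hne, Finset.mem_univ _⟩)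
        split_ifs <;> simp [hfg]
      rw [Finset.sum_eq_single (g', x, y) hterm hlast]
      simp [rep_d]



end
end

section
/- Let X = ⊔G_n be a space of graphs and (π_n : G̃_n → G_n) an asymptotically faithful covering sequence such that the family {G̃_n} has the uniform operator norm localization property with constant c ∈ (0,1]. Then for every locally compact bounded operator T on ℓ²(X,H₀) of propagation at most R, there exists N such that for all n ≥ N the lift T̃⁽ⁿ⁾ at scale R of T⁽ⁿ⁾ defines a bounded operator on ℓ²(G̃_n,H₀) with ‖T̃⁽ⁿ⁾‖ ≤ (1/c)·‖T‖. -/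
noncomputable section

open scoped ENNReal

namespace LiftAux

open scoped ENNReal

variable {H : Type*} [NormedAddCommGroup H] [InnerProductSpace ℂ H]

lemma entry_apply {Y : Type*} [inst : DecidableEq Y] (T : L2 Y H →L[ℂ] L2 Y H) (x y : Y)
    (v : H) : Roe.entry T x y v = T (lp.single 2 y v) x := by
  have h : inst = Classical.decEq Y := Subsingleton.elim _ _
  subst h
  rfl

lemma norm_entry_le {Y : Type*} (T : L2 Y H →L[ℂ] L2 Y H) (x y : Y) :
    ‖Roe.entry T x y‖ ≤ ‖T‖ :=
  LinearMap.mkContinuous_norm_le _ (norm_nonneg T) _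

lemma entry_zero {Y : Type*} (x y : Y) : Roe.entry (0 : L2 Y H →L[ℂ] L2 Y H) x y = 0 := by
  classical
  ext v
  rw [entry_apply]
  simp [lp.coeFn_zero]

lemma rpow_toReal_two (x : ℝ) : x ^ ((2 : ℝ≥0∞)).toReal = x ^ (2 : ℕ) := by
  rw [show ((2:ℝ≥0∞)).toReal = ((2:ℕ):ℝ) by norm_num, Real.rpow_natCast]

lemma lp2_sum_le {α : Type*} (f : lp (fun _ : α => H) 2) (s : Finset α) :
    ∑ a ∈ s, ‖f a‖ ^ (2:ℕ) ≤ ‖f‖ ^ (2:ℕ) := by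
  have h := lp.hasSum_norm (p := 2) (by norm_num) f
  simp only [rpow_toReal_two] at h
  exact sum_le_hasSum s (fun a _ => by positivity) h

lemma lp2_norm_le {α : Type*} (f : lp (fun _ : α => H) 2) {C : ℝ} (hC : 0 ≤ C)
    (h : ∀ s : Finset α, ∑ a ∈ s, ‖f a‖ ^ (2:ℕ) ≤ C ^ (2:ℕ)) : ‖f‖ ≤ C := by
  have h2 := lp.hasSum_norm (p := 2) (by norm_num) f
  simp only [rpow_toReal_two] at h2
  have ht : ∑' a, ‖f a‖ ^ (2:ℕ) ≤ C ^ (2:ℕ) := h2.summable.tsum_le_of_sum_le h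
  rw [h2.tsum_eq] at ht
  exact (pow_le_pow_iff_left₀ (norm_nonneg _) hC (by norm_num)).mp ht

lemma memℓp_two_of_bound {α : Type*} {f : α → H} {C : ℝ}
    (h : ∀ s : Finset α, ∑ a ∈ s, ‖f a‖ ^ (2:ℕ) ≤ C) : Memℓp f 2 := by
  apply memℓp_gen' (C := C)
  intro s
  calc ∑ a ∈ s, ‖f a‖ ^ (2:ℝ≥0∞).toReal = ∑ a ∈ s, ‖f a‖ ^ (2:ℕ) := by
        simp only [rpow_toReal_two]
    _ ≤ C := h s

lemma sum_sq_le_of_inj {α β : Type*} {D : ℝ} (hD : 0 ≤ D) (f : α → H)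
    (g : lp (fun _ : β => H) 2) (e : α → β)
    (hinj : ∀ a a', f a ≠ 0 → f a' ≠ 0 → e a = e a' → a = a')
    (hle : ∀ a, f a ≠ 0 → ‖f a‖ ≤ D * ‖g (e a)‖) (s : Finset α) :
    ∑ a ∈ s, ‖f a‖ ^ (2:ℕ) ≤ (D * ‖g‖) ^ (2:ℕ) := by
  classical
  have h1 : ∑ a ∈ s.filter (fun a => f a ≠ 0), ‖f a‖ ^ (2:ℕ) = ∑ a ∈ s, ‖f a‖ ^ (2:ℕ) := by
    refine Finset.sum_filter_of_ne ?_
    intro a _ h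
    contrapose! h
    simp [h]
  rw [← h1]
  have h2 : ∑ a ∈ s.filter (fun a => f a ≠ 0), ‖f a‖ ^ (2:ℕ)
      ≤ ∑ a ∈ s.filter (fun a => f a ≠ 0), D ^ (2:ℕ) * ‖g (e a)‖ ^ (2:ℕ) := by
    refine Finset.sum_le_sum fun a ha => ?_
    have hh := hle a (Finset.mem_filter.mp ha).2
    calc ‖f a‖ ^ (2:ℕ) ≤ (D * ‖g (e a)‖) ^ (2:ℕ) :=
          pow_le_pow_left₀ (norm_nonneg _) hh 2
      _ = D ^ (2:ℕ) * ‖g (e a)‖ ^ (2:ℕ) := mul_pow _ _ _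
  refine h2.trans ?_
  rw [← Finset.mul_sum]
  have h3 : ∑ a ∈ s.filter (fun a => f a ≠ 0), ‖g (e a)‖ ^ (2:ℕ)
      = ∑ b ∈ (s.filter (fun a => f a ≠ 0)).image e, ‖g b‖ ^ (2:ℕ) := by
    rw [Finset.sum_image]
    intro a ha a' ha' hee
    exact hinj a a' (Finset.mem_filter.mp ha).2 (Finset.mem_filter.mp ha').2 hee
  rw [h3, mul_pow]
  exact mul_le_mul_of_nonneg_left (lp2_sum_le g _) (by positivity)

lemma lp_sum_apply {α ι : Type*} (s : Finset ι) (F : ι → lp (fun _ : α => H) 2) (u : α) :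
    (↑(∑ i ∈ s, F i) : ∀ _ : α, H) u = ∑ i ∈ s, F i u := by
  rw [lp.coeFn_sum]
  exact Finset.sum_apply u s _

end LiftAux
namespace LiftAux

section Lift

variable {H : Type*} [NormedAddCommGroup H] [InnerProductSpace ℂ H]
variable {Wn Vn : Type*}

open Classical in
/-- matrix-entry function of the lift: `(x,y)`-piece. -/
def Lfun (πn : Wn → Vn) (d' : Wn → Wn → ℝ) (R : ℝ) (a : Vn → Vn → (H →L[ℂ] H))
    (x y : Vn) (ξ : L2 Wn H) (u : Wn) : H :=
  if h : πn u = x ∧ ∃ v, πn v = y ∧ d' u v ≤ R then a x y (ξ h.2.choose) else 0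

variable {πn : Wn → Vn} {d' : Wn → Wn → ℝ} {R : ℝ} {a : Vn → Vn → (H →L[ℂ] H)}

lemma Lfun_sum_sq_le {C : ℝ} (hC : 0 ≤ C) (ha : ∀ x y, ‖a x y‖ ≤ C)
    (hinj : ∀ u u' v : Wn, d' u v ≤ R → d' u' v ≤ R → πn u = πn u' → u = u')
    (x y : Vn) (ξ : L2 Wn H) (s : Finset Wn) :
    ∑ u ∈ s, ‖Lfun πn d' R a x y ξ u‖ ^ (2:ℕ) ≤ (C * ‖ξ‖) ^ (2:ℕ) := by
  classical
  refine sum_sq_le_of_inj hC _ ξ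
    (fun u => if h : πn u = x ∧ ∃ v, πn v = y ∧ d' u v ≤ R then h.2.choose else u) ?_ ?_ s
  · intro u u' hu hu' hee
    have hcu : πn u = x ∧ ∃ v, πn v = y ∧ d' u v ≤ R := by
      by_contra hc; exact hu (by simp only [Lfun, dif_neg hc])
    have hcu' : πn u' = x ∧ ∃ v, πn v = y ∧ d' u' v ≤ R := by
      by_contra hc; exact hu' (by simp only [Lfun, dif_neg hc])
    rw [dif_pos hcu, dif_pos hcu'] at hee
    refine hinj u u' hcu.2.choose hcu.2.choose_spec.2 ?_ (hcu.1.trans hcu'.1.symm)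
    rw [hee]; exact hcu'.2.choose_spec.2
  · intro u hu
    have hcu : πn u = x ∧ ∃ v, πn v = y ∧ d' u v ≤ R := by
      by_contra hc; exact hu (by simp only [Lfun, dif_neg hc])
    simp only [Lfun, dif_pos hcu]
    calc ‖a x y (ξ hcu.2.choose)‖ ≤ ‖a x y‖ * ‖ξ hcu.2.choose‖ := (a x y).le_opNorm _
      _ ≤ C * ‖ξ hcu.2.choose‖ :=
          mul_le_mul_of_nonneg_right (ha x y) (norm_nonneg _)

/-- the `(x,y)`-piece of the lift, as a bounded operator. -/
def Lop {C : ℝ} (hC : 0 ≤ C) (ha : ∀ x y, ‖a x y‖ ≤ C)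
    (hinj : ∀ u u' v : Wn, d' u v ≤ R → d' u' v ≤ R → πn u = πn u' → u = u')
    (x y : Vn) : L2 Wn H →L[ℂ] L2 Wn H :=
  LinearMap.mkContinuous
    { toFun := fun ξ => (⟨Lfun πn d' R a x y ξ,
        memℓp_two_of_bound (fun s => Lfun_sum_sq_le hC ha hinj x y ξ s)⟩ : L2 Wn H)
      map_add' := by
        intro ξ ζ
        apply lp.ext
        funext u
        show Lfun πn d' R a x y (ξ + ζ) u
            = (Lfun πn d' R a x y ξ u) + (Lfun πn d' R a x y ζ u)
        by_cases h : πn u = x ∧ ∃ v, πn v = y ∧ d' u v ≤ R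
        · simp only [Lfun, dif_pos h, lp.coeFn_add, Pi.add_apply, map_add]
        · simp only [Lfun, dif_neg h, add_zero]
      map_smul' := by
        intro r ξ
        apply lp.ext
        funext u
        show Lfun πn d' R a x y (r • ξ) u = r • (Lfun πn d' R a x y ξ u)
        by_cases h : πn u = x ∧ ∃ v, πn v = y ∧ d' u v ≤ R
        · simp only [Lfun, dif_pos h, lp.coeFn_smul, Pi.smul_apply, map_smul]
        · simp only [Lfun, dif_neg h, smul_zero] }
    C
    (fun ξ => lp2_norm_le _ (mul_nonneg hC (norm_nonneg ξ))
      (fun s => Lfun_sum_sq_le hC ha hinj x y ξ s))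

lemma Lop_apply {C : ℝ} (hC : 0 ≤ C) (ha : ∀ x y, ‖a x y‖ ≤ C)
    (hinj : ∀ u u' v : Wn, d' u v ≤ R → d' u' v ≤ R → πn u = πn u' → u = u')
    (x y : Vn) (ξ : L2 Wn H) (u : Wn) :
    Lop hC ha hinj x y ξ u = Lfun πn d' R a x y ξ u := rfl

variable [Fintype Vn]

/-- the lift operator. -/
def Tlift {C : ℝ} (hC : 0 ≤ C) (ha : ∀ x y, ‖a x y‖ ≤ C)
    (hinj : ∀ u u' v : Wn, d' u v ≤ R → d' u' v ≤ R → πn u = πn u' → u = u') :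
    L2 Wn H →L[ℂ] L2 Wn H :=
  ∑ x : Vn, ∑ y : Vn, Lop hC ha hinj x y

lemma Tlift_apply {C : ℝ} (hC : 0 ≤ C) (ha : ∀ x y, ‖a x y‖ ≤ C)
    (hinj : ∀ u u' v : Wn, d' u v ≤ R → d' u' v ≤ R → πn u = πn u' → u = u')
    (ξ : L2 Wn H) (u : Wn) :
    Tlift hC ha hinj ξ u = ∑ x : Vn, ∑ y : Vn, Lfun πn d' R a x y ξ u := by
  have h1 : Tlift hC ha hinj ξ = ∑ x : Vn, ∑ y : Vn, Lop hC ha hinj x y ξ := by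
    simp [Tlift, ContinuousLinearMap.sum_apply]
  rw [h1, lp_sum_apply]
  refine Finset.sum_congr rfl fun x _ => ?_
  rw [lp_sum_apply]
  rfl

end Lift

end LiftAux
namespace LiftAux

section Lift2

variable {H : Type*} [NormedAddCommGroup H] [InnerProductSpace ℂ H]
variable {Wn Vn : Type*} [Fintype Vn]
variable {πn : Wn → Vn} {d' : Wn → Wn → ℝ} {R : ℝ} {a : Vn → Vn → (H →L[ℂ] H)}

lemma Lfun_single_eq [DecidableEq Wn] {x y : Vn} {u v : Wn} (w : H)
    (hx : πn u = x) (hv : πn v = y) (hd : d' u v ≤ R)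
    (huniq : ∀ v' : Wn, πn v' = y → d' u v' ≤ R → v' = v) :
    Lfun πn d' R a x y (lp.single 2 v w) u = a x y w := by
  classical
  have hcond : πn u = x ∧ ∃ v', πn v' = y ∧ d' u v' ≤ R := ⟨hx, v, hv, hd⟩
  have hch : hcond.2.choose = v :=
    huniq hcond.2.choose hcond.2.choose_spec.1 hcond.2.choose_spec.2
  unfold Lfun
  rw [dif_pos hcond]
  rw [hch, lp.single_apply_self]

lemma Lfun_single_eq_zero [DecidableEq Wn] {x y : Vn} {u v : Wn} (w : H)
    (hv : ∀ v' : Wn, πn v' = y → d' u v' ≤ R → v' ≠ v) :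
    Lfun πn d' R a x y (lp.single 2 v w) u = 0 := by
  classical
  unfold Lfun
  by_cases h : πn u = x ∧ ∃ v', πn v' = y ∧ d' u v' ≤ R
  · rw [dif_pos h]
    have hne : h.2.choose ≠ v := hv _ h.2.choose_spec.1 h.2.choose_spec.2
    rw [lp.single_apply_ne _ _ _ hne, map_zero]
  · rw [dif_neg h]

lemma Lfun_eq_zero_of_ne {x y : Vn} {u : Wn} (hx : πn u ≠ x) (ξ : L2 Wn H) :
    Lfun πn d' R a x y ξ u = 0 := by
  classical
  unfold Lfun
  rw [dif_neg]
  intro hc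
  exact hx hc.1

lemma Lfun_eq_a {x y : Vn} {u v : Wn} (ξ : L2 Wn H)
    (hx : πn u = x) (hv : πn v = y) (hd : d' u v ≤ R)
    (huniq : ∀ v' : Wn, πn v' = y → d' u v' ≤ R → v' = v) :
    Lfun πn d' R a x y ξ u = a x y (ξ v) := by
  have hcond : πn u = x ∧ ∃ v', πn v' = y ∧ d' u v' ≤ R := ⟨hx, v, hv, hd⟩
  have hch : hcond.2.choose = v :=
    huniq hcond.2.choose hcond.2.choose_spec.1 hcond.2.choose_spec.2
  unfold Lfun
  rw [dif_pos hcond, hch]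

lemma Lfun_cases (x y : Vn) (ξ : L2 Wn H) (u : Wn) :
    Lfun πn d' R a x y ξ u = 0 ∨
      ∃ v : Wn, πn v = y ∧ d' u v ≤ R ∧ πn u = x ∧
        Lfun πn d' R a x y ξ u = a x y (ξ v) := by
  by_cases h : πn u = x ∧ ∃ v, πn v = y ∧ d' u v ≤ R
  · right
    exact ⟨h.2.choose, h.2.choose_spec.1, h.2.choose_spec.2, h.1, by
      unfold Lfun; rw [dif_pos h]⟩
  · left
    unfold Lfun
    rw [dif_neg h]

lemma Tlift_entry_le [DecidableEq Wn] {C : ℝ} (hC : 0 ≤ C) (ha : ∀ x y, ‖a x y‖ ≤ C)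
    (hinj : ∀ u u' v : Wn, d' u v ≤ R → d' u' v ≤ R → πn u = πn u' → u = u')
    (huniq : ∀ u v v' : Wn, d' u v ≤ R → d' u v' ≤ R → πn v = πn v' → v = v')
    (u v : Wn) (huv : d' u v ≤ R) :
    Roe.entry (Tlift hC ha hinj) u v = a (πn u) (πn v) := by
  classical
  ext w
  rw [entry_apply, Tlift_apply]
  rw [Finset.sum_eq_single (πn u)]
  · rw [Finset.sum_eq_single (πn v)]
    · exact Lfun_single_eq w rfl rfl huv (fun v' h1 h2 => huniq u v' v h2 huv h1)
    · intro y _ hy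
      refine Lfun_single_eq_zero w fun v' h1 h2 hc => ?_
      exact hy (by rw [← h1, hc])
    · intro h; exact absurd (Finset.mem_univ _) h
  · intro x _ hx
    exact Finset.sum_eq_zero fun y _ => Lfun_eq_zero_of_ne (fun hc => hx hc.symm) _
  · intro h; exact absurd (Finset.mem_univ _) h

lemma Tlift_entry_gt [DecidableEq Wn] {C : ℝ} (hC : 0 ≤ C) (ha : ∀ x y, ‖a x y‖ ≤ C)
    (hinj : ∀ u u' v : Wn, d' u v ≤ R → d' u' v ≤ R → πn u = πn u' → u = u')
    (u v : Wn) (huv : ¬ d' u v ≤ R) :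
    Roe.entry (Tlift hC ha hinj) u v = 0 := by
  classical
  ext w
  rw [entry_apply, Tlift_apply, ContinuousLinearMap.zero_apply]
  refine Finset.sum_eq_zero fun x _ => Finset.sum_eq_zero fun y _ => ?_
  exact Lfun_single_eq_zero w fun v' h1 h2 hc => huv (hc ▸ h2)

end Lift2

lemma gdist_nonneg {V' : Type*} (G : SimpleGraph V') (u v : V') : 0 ≤ gdist G u v :=
  Nat.cast_nonneg _

lemma gdist_comm {V' : Type*} (G : SimpleGraph V') (u v : V') : gdist G u v = gdist G v u := by
  unfold gdist; rw [SimpleGraph.dist_comm]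

lemma gdist_self {V' : Type*} (G : SimpleGraph V') (u : V') : gdist G u u = 0 := by
  unfold gdist; simp

lemma gdist_triangle {V' : Type*} {G : SimpleGraph V'} (h : G.Connected) (u v w : V') :
    gdist G u w ≤ gdist G u v + gdist G v w := by
  unfold gdist
  exact_mod_cast h.dist_triangle (v := v)

lemma exists_adj_of_dist {V' : Type*} {G : SimpleGraph V'} {b w' : V'} {m : ℕ}
    (h : G.dist b w' = m + 1) (hr : G.Reachable b w') :
    ∃ z : V', G.dist b z ≤ m ∧ G.Adj z w' := by
  obtain ⟨q, hq⟩ := hr.symm.exists_walk_length_eq_dist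
  rw [SimpleGraph.dist_comm, h] at hq
  cases q with
  | nil => simp at hq
  | cons hadj q' =>
    rename_i z
    refine ⟨z, ?_, hadj.symm⟩
    have h1 := SimpleGraph.dist_le q'.reverse
    rw [SimpleGraph.Walk.length_reverse] at h1
    simp only [SimpleGraph.Walk.length_cons] at hq
    omega
  done

lemma ball_finite {V' : Type*} {G : SimpleGraph V'} (hconn : G.Connected)
    (hloc : ∀ w : V', {w' : V' | G.dist w w' ≤ 1}.Finite) (b : V') :
    ∀ m : ℕ, {w : V' | G.dist b w ≤ m}.Finite := by
  intro m
  induction m with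
  | zero =>
    refine (Set.finite_singleton b).subset ?_
    intro w hw
    simp only [Set.mem_setOf_eq, Nat.le_zero] at hw
    have : b = w := (hconn.dist_eq_zero_iff).mp hw
    simp [this.symm]
  | succ m ih =>
    refine (ih.biUnion (fun w _ => hloc w)).subset ?_
    intro w' hw'
    simp only [Set.mem_setOf_eq] at hw'
    by_cases hle : G.dist b w' ≤ m
    · exact Set.mem_biUnion hle (by simp [SimpleGraph.dist_self])
    · have hd : G.dist b w' = m + 1 := by omega
      obtain ⟨z, hz1, hz2⟩ := exists_adj_of_dist hd (hconn.preconnected b w')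
      refine Set.mem_biUnion hz1 ?_
      simp only [Set.mem_setOf_eq]
      have := SimpleGraph.dist_le (SimpleGraph.Walk.cons hz2 SimpleGraph.Walk.nil)
      simpa using this

end LiftAux
/-- under asymptotic faithfulness and the uniform operator norm localization
property of the covers, lifts of blocks of finite propagation operators are bounded,
with norm at most (1/c)·‖T‖, for all sufficiently large n. -/
theorem lift_norm_bound
    (H₀ : Type) [NormedAddCommGroup H₀] [InnerProductSpace ℂ H₀] [CompleteSpace H₀]
    [TopologicalSpace.SeparableSpace H₀] (hinf : ¬ FiniteDimensional ℂ H₀)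
    -- a space of graphs X = ⊔ₙ Gₙ
    (V : ℕ → Type) [∀ n, Fintype (V n)] (G : ∀ n, SimpleGraph (V n))
    (hconn : ∀ n, (G n).Connected)
    [MetricSpace (Σ k, V k)]
    (hrestr : ∀ (n : ℕ) (u v : V n), dist (⟨n, u⟩ : Σ k, V k) ⟨n, v⟩ = gdist (G n) u v)
    (hsep : ∀ C : ℝ, ∃ N : ℕ, ∀ m n : ℕ, m ≠ n → N ≤ m + n →
      ∀ (u : V m) (v : V n), C ≤ dist (⟨m, u⟩ : Σ k, V k) ⟨n, v⟩)
    -- a Galois covering sequence (G̃ₙ → Gₙ) with deck groups Γₙ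
    (W : ℕ → Type) (G' : ∀ n, SimpleGraph (W n)) (hconn' : ∀ n, (G' n).Connected)
    (Γ : ℕ → Type) [∀ n, Group (Γ n)] [∀ n, MulAction (Γ n) (W n)]
    (hact : ∀ (n : ℕ) (γ : Γ n) (u v : W n), (G' n).Adj (γ • u) (γ • v) ↔ (G' n).Adj u v)
    (hfree : ∀ (n : ℕ) (γ : Γ n) (u : W n), γ • u = u → γ = 1)
    (π : ∀ n, W n → V n) (hπ : ∀ n, Function.Surjective (π n))
    (hfib : ∀ (n : ℕ) (u v : W n), π n u = π n v ↔ ∃ γ : Γ n, γ • u = v)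
    (hquot : ∀ (n : ℕ) (x y : V n),
      (G n).Adj x y ↔ ∃ u v : W n, π n u = x ∧ π n v = y ∧ (G' n).Adj u v)
    -- asymptotic faithfulness
    (hfaith : ∀ R : ℝ, 0 < R → ∃ N : ℕ, ∀ n : ℕ, N ≤ n →
      IsMetricCover (gdist (G' n)) (gdist (G n)) (π n) R)
    -- uniform operator norm localization for the covers, with constant c
    (c : ℝ) (hc0 : 0 < c) (hc1 : c ≤ 1)
    (honl : ∀ R : ℝ, 0 < R → ∃ S : ℝ, 0 < S ∧
      ∀ (n : ℕ) (A : L2 (W n) H₀ →L[ℂ] L2 (W n) H₀),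
        Roe.LocallyCompact (gdist (G' n)) A → Roe.PropagationLE (gdist (G' n)) A R →
        ∃ ξ : L2 (W n) H₀, ‖ξ‖ = 1 ∧ Roe.SupportDiamLE (gdist (G' n)) ξ S ∧
          c * ‖A‖ ≤ ‖A ξ‖) :
    ∀ (T : L2 (Σ k, V k) H₀ →L[ℂ] L2 (Σ k, V k) H₀) (R : ℝ),
      Roe.LocallyCompact (fun x y : Σ k, V k => dist x y) T →
      Roe.PropagationLE (fun x y : Σ k, V k => dist x y) T R →
      ∃ N : ℕ, ∀ n : ℕ, N ≤ n →
        ∃ T' : L2 (W n) H₀ →L[ℂ] L2 (W n) H₀,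
          IsBlockLift (π n) (gdist (G' n)) T R T' ∧ ‖T'‖ ≤ (1 / c) * ‖T‖ := by
  classical
  intro T R hTlc hTprop
  by_cases hRneg : R < 0
  · refine ⟨0, fun n _ => ⟨0, ?_, ?_⟩⟩
    · intro u v
      refine ⟨fun h => absurd h (not_le.mpr ?_), fun _ => LiftAux.entry_zero _ _⟩
      exact lt_of_lt_of_le hRneg (LiftAux.gdist_nonneg _ _ _)
    · rw [norm_zero]
      exact mul_nonneg (div_nonneg zero_le_one hc0.le) (norm_nonneg T)
  push_neg at hRneg
  obtain ⟨S, hS0, honl'⟩ := honl (R + 1) (by linarith)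
  set K : ℝ := S + 2 * R + 8 with hKdef
  have hK0 : (0:ℝ) < K := by rw [hKdef]; linarith
  obtain ⟨N, hN⟩ := hfaith K hK0
  refine ⟨N, fun n hn => ?_⟩
  have hcov := hN n hn
  -- cover helpers
  have hπinj : ∀ u w w' : W n, gdist (G' n) u w < K → gdist (G' n) u w' < K →
      π n w = π n w' → w = w' := fun u w w' hw hw' hp => (hcov.2 u).1.2.1 hw hw' hp
  have hiso : ∀ u w w' : W n, gdist (G' n) u w < K → gdist (G' n) u w' < K →
      gdist (G n) (π n w) (π n w') = gdist (G' n) w w' := fun u => (hcov.2 u).2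
  have hlift : ∀ (u : W n) (x : V n), gdist (G n) (π n u) x < K →
      ∃ w, π n w = x ∧ gdist (G' n) u w = gdist (G n) (π n u) x := by
    intro u x hx
    obtain ⟨w, hw, hwx⟩ := (hcov.2 u).1.2.2 hx
    refine ⟨w, hwx, ?_⟩
    rw [← hwx]
    exact (hiso u u w (by rw [LiftAux.gdist_self]; exact hK0) hw).symm
  -- metric facts
  have hsymm : ∀ u v : W n, gdist (G' n) u v = gdist (G' n) v u := LiftAux.gdist_comm _
  have htri : ∀ u v w : W n, gdist (G' n) u w ≤ gdist (G' n) u v + gdist (G' n) v w :=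
    fun u v w => LiftAux.gdist_triangle (hconn' n) u v w
  have hd'_nonneg : ∀ u v : W n, 0 ≤ gdist (G' n) u v := LiftAux.gdist_nonneg _
  have hRK : R < K := by rw [hKdef]; linarith
  -- matrix entries
  have ha_norm : ∀ x y : V n, ‖Roe.entry T (⟨n,x⟩ : Σ k, V k) ⟨n,y⟩‖ ≤ ‖T‖ :=
    fun x y => LiftAux.norm_entry_le T _ _
  have ha_prop : ∀ x y : V n, R < gdist (G n) x y →
      Roe.entry T (⟨n,x⟩ : Σ k, V k) ⟨n,y⟩ = 0 := by
    intro x y h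
    refine hTprop ⟨n,x⟩ ⟨n,y⟩ ?_
    show R < dist (⟨n,x⟩ : Σ k, V k) ⟨n,y⟩
    rw [hrestr]
    exact h
  -- injectivity hypotheses
  have hinjL : ∀ u u' v : W n, gdist (G' n) u v ≤ R → gdist (G' n) u' v ≤ R →
      π n u = π n u' → u = u' := by
    intro u u' v h1 h2 hp
    refine hπinj v u u' ?_ ?_ hp
    · rw [hsymm v u]; exact lt_of_le_of_lt h1 hRK
    · rw [hsymm v u']; exact lt_of_le_of_lt h2 hRK
  have huniqL : ∀ u v v' : W n, gdist (G' n) u v ≤ R → gdist (G' n) u v' ≤ R →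
      π n v = π n v' → v = v' := by
    intro u v v' h1 h2 hp
    exact hπinj u v v' (lt_of_le_of_lt h1 hRK) (lt_of_le_of_lt h2 hRK) hp
  -- the lifted operator
  set T' := LiftAux.Tlift (πn := π n) (d' := gdist (G' n)) (R := R)
      (a := fun x y => Roe.entry T ⟨n,x⟩ ⟨n,y⟩) (norm_nonneg T) ha_norm hinjL with hT'def
  have hent1 : ∀ u v : W n, gdist (G' n) u v ≤ R →
      Roe.entry T' u v = Roe.entry T ⟨n, π n u⟩ ⟨n, π n v⟩ := by
    intro u v huv
    rw [hT'def]
    exact LiftAux.Tlift_entry_le _ _ _ huniqL u v huv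
  have hent2 : ∀ u v : W n, ¬ gdist (G' n) u v ≤ R → Roe.entry T' u v = 0 := by
    intro u v huv
    rw [hT'def]
    exact LiftAux.Tlift_entry_gt _ _ _ u v huv
  have hblock : IsBlockLift (π n) (gdist (G' n)) T R T' :=
    fun u v => ⟨fun h => hent1 u v h, fun h => hent2 u v (not_le.mpr h)⟩
  -- propagation of T'
  have hpropT' : Roe.PropagationLE (gdist (G' n)) T' (R + 1) := by
    intro u v h
    exact hent2 u v (not_le.mpr (by linarith))
  -- local compactness of T'
  have hlocT' : Roe.LocallyCompact (gdist (G' n)) T' := by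
    constructor
    · intro u v
      by_cases h : gdist (G' n) u v ≤ R
      · rw [hent1 u v h]; exact hTlc.1 _ _
      · rw [hent2 u v h]
        exact isCompactOperator_zero
    · intro B hB
      obtain ⟨CB, hCB⟩ := hB
      rcases Set.eq_empty_or_nonempty B with hBe | ⟨b₀, hb₀⟩
      · refine Set.Finite.subset (Set.finite_empty) ?_
        rintro ⟨p1, p2⟩ ⟨h1, -, -⟩
        rw [hBe] at h1
        exact h1
      · have hloc1 : ∀ w : W n, {w' : W n | (G' n).dist w w' ≤ 1}.Finite := by
          intro w
          have hK1 : (1:ℝ) < K := by rw [hKdef]; linarith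
          have hfin : {w' : W n | gdist (G' n) w w' < K}.Finite :=
            Set.Finite.of_finite_image (Set.toFinite _) (hcov.2 w).1.2.1
          refine hfin.subset ?_
          intro w' hw'
          simp only [Set.mem_setOf_eq] at hw' ⊢
          have h1 : ((G' n).dist w w' : ℝ) ≤ 1 := by exact_mod_cast hw'
          exact lt_of_le_of_lt h1 hK1
        have hball := LiftAux.ball_finite (hconn' n) hloc1 b₀ ⌈CB⌉₊
        refine Set.Finite.subset (hball.prod hball) ?_
        rintro ⟨p1, p2⟩ ⟨h1, h2, -⟩
        have hmem : ∀ p ∈ B, (G' n).dist b₀ p ≤ ⌈CB⌉₊ := by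
          intro p hp
          have hle : ((G' n).dist b₀ p : ℝ) ≤ CB := hCB b₀ hb₀ p hp
          have := hle.trans (Nat.le_ceil CB)
          exact_mod_cast this
        exact ⟨hmem p1 h1, hmem p2 h2⟩
  -- apply operator norm localization
  obtain ⟨ξ, hξ1, hξS, hξest⟩ := honl' n T' hlocT' hpropT'
  -- a point in the support of ξ
  obtain ⟨u₀, hu₀⟩ : ∃ u₀ : W n, ξ u₀ ≠ 0 := by
    by_contra hcon
    push_neg at hcon
    have hz : ξ = 0 := lp.ext (funext fun u => by simpa using hcon u)
    rw [hz, norm_zero] at hξ1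
    exact zero_ne_one hξ1
  -- pushforward of ξ
  set η : V n → H₀ := fun x =>
    if h : ∃ v : W n, π n v = x ∧ gdist (G' n) u₀ v < K then ξ h.choose else 0 with hηdef
  have hηval : ∀ v : W n, gdist (G' n) u₀ v < K → η (π n v) = ξ v := by
    intro v hv
    have hex : ∃ v' : W n, π n v' = π n v ∧ gdist (G' n) u₀ v' < K := ⟨v, rfl, hv⟩
    show (if h : ∃ v' : W n, π n v' = π n v ∧ gdist (G' n) u₀ v' < K
        then ξ h.choose else 0) = ξ v
    rw [dif_pos hex]
    have hch : hex.choose = v :=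
      hπinj u₀ hex.choose v hex.choose_spec.2 hv hex.choose_spec.1
    rw [hch]
  have hηsum : ∀ s : Finset (V n), ∑ x ∈ s, ‖η x‖ ^ (2:ℕ) ≤ ((1:ℝ) * ‖ξ‖) ^ (2:ℕ) := by
    intro s
    refine LiftAux.sum_sq_le_of_inj zero_le_one η ξ
      (fun x => if h : ∃ v : W n, π n v = x ∧ gdist (G' n) u₀ v < K
        then h.choose else u₀) ?_ ?_ s
    · intro x x' hx hx' hee
      have hcx : ∃ v : W n, π n v = x ∧ gdist (G' n) u₀ v < K := by
        by_contra hcc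
        refine hx ?_
        show (if h : ∃ v : W n, π n v = x ∧ gdist (G' n) u₀ v < K
          then ξ h.choose else 0) = 0
        rw [dif_neg hcc]
      have hcx' : ∃ v : W n, π n v = x' ∧ gdist (G' n) u₀ v < K := by
        by_contra hcc
        refine hx' ?_
        show (if h : ∃ v : W n, π n v = x' ∧ gdist (G' n) u₀ v < K
          then ξ h.choose else 0) = 0
        rw [dif_neg hcc]
      rw [dif_pos hcx, dif_pos hcx'] at hee
      rw [← hcx.choose_spec.1, ← hcx'.choose_spec.1, hee]
    · intro x hx
      have hcx : ∃ v : W n, π n v = x ∧ gdist (G' n) u₀ v < K := by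
        by_contra hcc
        refine hx ?_
        show (if h : ∃ v : W n, π n v = x ∧ gdist (G' n) u₀ v < K
          then ξ h.choose else 0) = 0
        rw [dif_neg hcc]
      have h1 : η x = ξ hcx.choose := by
        show (if h : ∃ v : W n, π n v = x ∧ gdist (G' n) u₀ v < K
          then ξ h.choose else 0) = ξ hcx.choose
        rw [dif_pos hcx]
      rw [h1]
      dsimp only
      rw [dif_pos hcx, one_mul]
  -- the corresponding element of ℓ²(X)
  set η' : L2 (Σ k, V k) H₀ :=
    ∑ x : V n, lp.single 2 (⟨n, x⟩ : Σ k, V k) (η x) with hη'def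
  have hη'coord : ∀ x : V n, η' ⟨n, x⟩ = η x := by
    intro x
    rw [hη'def, LiftAux.lp_sum_apply]
    rw [Finset.sum_eq_single x]
    · exact lp.single_apply_self _ _ _
    · intro x' _ hx'
      refine lp.single_apply_ne _ _ _ ?_
      intro hc
      obtain ⟨-, h2⟩ := Sigma.mk.inj_iff.mp hc
      exact hx' (eq_of_heq h2).symm
    · intro h; exact absurd (Finset.mem_univ _) h
  have hη'zero : ∀ z : Σ k, V k, z.1 ≠ n → η' z = 0 := by
    intro z hz
    rw [hη'def, LiftAux.lp_sum_apply]
    refine Finset.sum_eq_zero fun x _ => ?_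
    refine lp.single_apply_ne _ _ _ ?_
    intro hc
    exact hz (congrArg Sigma.fst hc)
  have hη'norm : ‖η'‖ ≤ 1 := by
    refine LiftAux.lp2_norm_le η' zero_le_one ?_
    intro s
    have hsum1 : ∑ z ∈ s, ‖η' z‖ ^ (2:ℕ)
        = ∑ z ∈ s ∩ (Finset.univ.image fun x : V n => (⟨n, x⟩ : Σ k, V k)), ‖η' z‖ ^ (2:ℕ) := by
      refine (Finset.sum_subset Finset.inter_subset_left ?_).symm
      intro z hz hz'
      have hzn : z.1 ≠ n := by
        intro hc
        apply hz'
        refine Finset.mem_inter.mpr ⟨hz, Finset.mem_image.mpr ⟨hc ▸ z.2, Finset.mem_univ _, ?_⟩⟩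
        subst hc
        rfl
      rw [hη'zero z hzn, norm_zero]
      simp
    rw [hsum1]
    have hsum2 : ∑ z ∈ s ∩ (Finset.univ.image fun x : V n => (⟨n, x⟩ : Σ k, V k)),
        ‖η' z‖ ^ (2:ℕ)
        ≤ ∑ z ∈ (Finset.univ.image fun x : V n => (⟨n, x⟩ : Σ k, V k)), ‖η' z‖ ^ (2:ℕ) := by
      refine Finset.sum_le_sum_of_subset_of_nonneg Finset.inter_subset_right ?_
      intro z _ _
      positivity
    refine hsum2.trans ?_
    rw [Finset.sum_image (fun x _ x' _ hc => by
      obtain ⟨-, h2⟩ := Sigma.mk.inj_iff.mp hc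
      exact eq_of_heq h2)]
    have hsum3 : ∑ x : V n, ‖η' ⟨n, x⟩‖ ^ (2:ℕ) = ∑ x : V n, ‖η x‖ ^ (2:ℕ) :=
      Finset.sum_congr rfl fun x _ => by rw [hη'coord]
    rw [hsum3]
    have := hηsum Finset.univ
    rw [one_mul, hξ1] at this
    exact this
  -- coordinates of T η'
  have hTη'apply : ∀ z : Σ k, V k,
      (T η') z = ∑ x : V n, Roe.entry T z ⟨n, x⟩ (η x) := by
    intro z
    rw [hη'def, map_sum, LiftAux.lp_sum_apply]
    exact Finset.sum_congr rfl fun x _ => (LiftAux.entry_apply T z ⟨n,x⟩ (η x)).symm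
  -- vanishing of T'ξ far from the support of ξ
  have hclaimB : ∀ u : W n, ¬ gdist (G' n) u₀ u ≤ S + R + 1 → T' ξ u = 0 := by
    intro u hu
    rw [hT'def, LiftAux.Tlift_apply]
    refine Finset.sum_eq_zero fun x _ => Finset.sum_eq_zero fun y _ => ?_
    rcases LiftAux.Lfun_cases (πn := π n) (d' := gdist (G' n)) (R := R)
      (a := fun x y => Roe.entry T ⟨n,x⟩ ⟨n,y⟩) x y ξ u with h0 | ⟨v, hv1, hv2, -, hv4⟩
    · exact h0
    · rw [hv4]
      by_cases hz : ξ v = 0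
      · rw [hz, map_zero]
      · exfalso
        apply hu
        have h1 : gdist (G' n) v u₀ ≤ S := hξS v u₀ hz hu₀
        calc gdist (G' n) u₀ u
            ≤ gdist (G' n) u₀ v + gdist (G' n) v u := htri _ _ _
          _ ≤ S + R := add_le_add (by rw [hsymm u₀ v]; exact h1)
              (by rw [hsymm v u]; exact hv2)
          _ ≤ S + R + 1 := by linarith
  -- identification of T'ξ with Tη' near the support of ξ
  have hclaimA : ∀ u : W n, gdist (G' n) u₀ u ≤ S + R + 1 →
      T' ξ u = (T η') ⟨n, π n u⟩ := by
    intro u hu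
    rw [hT'def, LiftAux.Tlift_apply, hTη'apply]
    rw [Finset.sum_eq_single (π n u)]
    · refine Finset.sum_congr rfl fun y _ => ?_
      by_cases hay : Roe.entry T (⟨n, π n u⟩ : Σ k, V k) ⟨n, y⟩ = 0
      · rw [hay, ContinuousLinearMap.zero_apply]
        rcases LiftAux.Lfun_cases (πn := π n) (d' := gdist (G' n)) (R := R)
          (a := fun x y => Roe.entry T ⟨n,x⟩ ⟨n,y⟩) (π n u) y ξ u with h0 | ⟨v, -, -, -, hv4⟩
        · exact h0
        · rw [hv4]
          show Roe.entry T (⟨n, π n u⟩ : Σ k, V k) ⟨n, y⟩ (ξ v) = 0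
          rw [hay, ContinuousLinearMap.zero_apply]
      · have hdist : gdist (G n) (π n u) y ≤ R := by
          by_contra hc
          exact hay (ha_prop _ _ (not_le.mp hc))
        obtain ⟨v, hv1, hv2⟩ := hlift u y (lt_of_le_of_lt hdist hRK)
        have hv2' : gdist (G' n) u v ≤ R := by rw [hv2]; exact hdist
        rw [LiftAux.Lfun_eq_a ξ rfl hv1 hv2'
          (fun v' h1 h2 => huniqL u v' v h2 hv2' (h1.trans hv1.symm))]
        have hv3 : gdist (G' n) u₀ v < K := by
          have h4 : gdist (G' n) u₀ v ≤ gdist (G' n) u₀ u + gdist (G' n) u v := htri _ _ _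
          have h5 : gdist (G' n) u₀ v ≤ (S + R + 1) + R := by
            refine h4.trans (add_le_add hu hv2')
          rw [hKdef]
          linarith
        have hη : η y = ξ v := by rw [← hv1]; exact hηval v hv3
        rw [hη]
    · intro x _ hx
      exact Finset.sum_eq_zero fun y _ =>
        LiftAux.Lfun_eq_zero_of_ne (fun hc => hx hc.symm) _
    · intro h; exact absurd (Finset.mem_univ _) h
  -- norm comparison
  have hTξ_le : ‖T' ξ‖ ≤ ‖T η'‖ := by
    refine LiftAux.lp2_norm_le _ (norm_nonneg _) ?_
    intro s
    have hinj2 : ∀ u u' : W n, T' ξ u ≠ 0 → T' ξ u' ≠ 0 →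
        (⟨n, π n u⟩ : Σ k, V k) = ⟨n, π n u'⟩ → u = u' := by
      intro u u' hu hu' hee
      have hu1 : gdist (G' n) u₀ u ≤ S + R + 1 := by
        by_contra hc; exact hu (hclaimB u hc)
      have hu2 : gdist (G' n) u₀ u' ≤ S + R + 1 := by
        by_contra hc; exact hu' (hclaimB u' hc)
      have hπeq : π n u = π n u' := by
        obtain ⟨-, h2⟩ := Sigma.mk.inj_iff.mp hee
        exact eq_of_heq h2
      have hK1 : S + R + 1 < K := by rw [hKdef]; linarith
      exact hπinj u₀ u u' (lt_of_le_of_lt hu1 hK1) (lt_of_le_of_lt hu2 hK1) hπeq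
    have hle2 : ∀ u : W n, T' ξ u ≠ 0 → ‖T' ξ u‖ ≤ 1 * ‖(T η') ⟨n, π n u⟩‖ := by
      intro u hu
      have hu1 : gdist (G' n) u₀ u ≤ S + R + 1 := by
        by_contra hc; exact hu (hclaimB u hc)
      rw [one_mul, hclaimA u hu1]
    have := LiftAux.sum_sq_le_of_inj zero_le_one (fun u : W n => T' ξ u) (T η')
      (fun u : W n => (⟨n, π n u⟩ : Σ k, V k)) hinj2 hle2 s
    rw [one_mul] at this
    exact this
  -- conclusion
  refine ⟨T', hblock, ?_⟩
  have hc' : c * ‖T'‖ ≤ ‖T‖ := by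
    refine le_trans hξest (le_trans hTξ_le ?_)
    calc ‖T η'‖ ≤ ‖T‖ * ‖η'‖ := T.le_opNorm η'
      _ ≤ ‖T‖ * 1 := mul_le_mul_of_nonneg_left hη'norm (norm_nonneg T)
      _ = ‖T‖ := mul_one _
  have heq : (1 / c) * ‖T‖ = ‖T‖ / c := by ring
  rw [heq]
  rw [le_div_iff₀ hc0, mul_comm]
  exact hc'

end
end

section
/- Let X = ⊔G_n be a space of graphs and (π_n : G̃_n → G_n) an asymptotically faithful covering sequence such that the family {G̃_n} has the uniform operator norm localization property with constant c ∈ (0,1]. If T is a locally compact bounded operator on ℓ²(X,H₀) of propagation at most R which is a ghost, then ‖T̃⁽ⁿ⁾‖ → 0 as n → ∞, where T̃⁽ⁿ⁾ denotes the lift at scale R of T⁽ⁿ⁾ to ℓ²(G̃_n,H₀) (defined and bounded for all sufficiently large n). -/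
noncomputable section

open scoped ENNReal

namespace Aux

variable {Z H : Type*} [NormedAddCommGroup H] [InnerProductSpace ℂ H]

theorem rpow_two_eq (a : ℝ) : a ^ ((2 : ℝ≥0∞).toReal) = a ^ (2 : ℕ) := by
  rw [show ((2:ℝ≥0∞).toReal) = ((2:ℕ):ℝ) by norm_num, Real.rpow_natCast]

theorem summable_sq (f : L2 Z H) : Summable (fun z => ‖f z‖ ^ (2:ℕ)) := by
  have := Memℓp.summable (E := fun _ : Z => H) (p := 2) (by norm_num) (lp.memℓp f)
  exact this.congr fun z => rpow_two_eq _

theorem norm_sq_eq_tsum (f : L2 Z H) : ‖f‖ ^ (2:ℕ) = ∑' z, ‖f z‖ ^ (2:ℕ) := by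
  have := lp.norm_rpow_eq_tsum (E := fun _ : Z => H) (p := 2) (by norm_num) f
  rw [rpow_two_eq] at this
  rw [this]
  exact tsum_congr fun z => rpow_two_eq _

theorem norm_sq_eq_sum (f : L2 Z H) (F : Finset Z) (hF : ∀ z, f z ≠ 0 → z ∈ F) :
    ‖f‖ ^ (2:ℕ) = ∑ z ∈ F, ‖f z‖ ^ (2:ℕ) := by
  rw [norm_sq_eq_tsum]
  refine tsum_eq_sum fun z hz => ?_
  have : f z = 0 := by by_contra h; exact hz (hF z h)
  simp [this]

theorem sum_sq_le (f : L2 Z H) (F : Finset Z) :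
    ∑ z ∈ F, ‖f z‖ ^ (2:ℕ) ≤ ‖f‖ ^ (2:ℕ) := by
  rw [norm_sq_eq_tsum]
  exact Summable.sum_le_tsum F (fun z _ => by positivity) (summable_sq f)

theorem norm_sq_sum_single [DecidableEq Z] (f : Z → H) (s : Finset Z) :
    ‖(∑ i ∈ s, lp.single 2 i (f i) : L2 Z H)‖ ^ (2:ℕ) = ∑ i ∈ s, ‖f i‖ ^ (2:ℕ) := by
  have := lp.norm_sum_single (E := fun _ : Z => H) (p := 2) (by norm_num) f s
  simp only [rpow_two_eq] at this
  exact this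

set_option maxHeartbeats 400000 in
theorem eq_sum_single [DecidableEq Z] (f : L2 Z H) (F : Finset Z)
    (hF : ∀ z, f z ≠ 0 → z ∈ F) :
    f = ∑ v ∈ F, lp.single 2 v (f v) := by
  apply lp.ext
  funext z
  rw [lp.coeFn_sum]
  simp only [Finset.sum_apply]
  have : ∀ v ∈ F, (lp.single (E := fun _ : Z => H) 2 v (f v)) z
      = if z = v then f z else 0 := by
    intro v _
    by_cases h : z = v
    · subst h; simp [lp.single_apply_self]
    · simp [lp.single_apply_ne _ _ _ h, h]
  rw [Finset.sum_congr rfl this]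
  by_cases hz : z ∈ F
  · rw [Finset.sum_ite_eq F z (fun _ => f z), if_pos hz]
  · have hz0 : f z = 0 := by by_contra h; exact hz (hF z h)
    rw [hz0]
    simp

theorem single_irrel (i1 i2 : DecidableEq Z) (y : Z) (v : H) :
    @lp.single Z (fun _ : Z => H) _ i1 2 y v = @lp.single Z (fun _ : Z => H) _ i2 2 y v := by
  congr
  exact Subsingleton.elim i1 i2

theorem entry_apply [inst : DecidableEq Z] (T : L2 Z H →L[ℂ] L2 Z H) (x y : Z) (v : H) :
    Roe.entry T x y v = T (lp.single 2 y v) x := by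
  rw [single_irrel inst (Classical.decEq Z)]
  rfl

theorem entry_add (T S : L2 Z H →L[ℂ] L2 Z H) (x y : Z) :
    Roe.entry (T + S) x y = Roe.entry T x y + Roe.entry S x y := by
  classical
  ext v
  simp only [entry_apply, ContinuousLinearMap.add_apply, lp.coeFn_add, Pi.add_apply]

theorem entry_zero (x y : Z) : Roe.entry (0 : L2 Z H →L[ℂ] L2 Z H) x y = 0 := by
  classical
  ext v
  simp only [entry_apply, ContinuousLinearMap.zero_apply, ContinuousLinearMap.coe_zero,
    Pi.zero_apply]
  rfl

theorem entry_sum {ι : Type*} (s : Finset ι) (A : ι → (L2 Z H →L[ℂ] L2 Z H)) (x y : Z) :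
    Roe.entry (∑ i ∈ s, A i) x y = ∑ i ∈ s, Roe.entry (A i) x y := by
  classical
  induction s using Finset.induction_on with
  | empty => simp [entry_zero]
  | insert _ _ hx ih =>
      rw [Finset.sum_insert hx, Finset.sum_insert hx, entry_add, ih]

theorem apply_eq_sum_entry [DecidableEq Z] (T : L2 Z H →L[ℂ] L2 Z H) (f : L2 Z H)
    (F : Finset Z) (hF : ∀ z, f z ≠ 0 → z ∈ F) (u : Z) :
    T f u = ∑ v ∈ F, Roe.entry T u v (f v) := by
  conv_lhs => rw [eq_sum_single f F hF]
  rw [map_sum, lp.coeFn_sum]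
  simp only [Finset.sum_apply]
  exact Finset.sum_congr rfl fun v _ => (entry_apply T u v (f v)).symm

end Aux


namespace Aux

variable {Z H : Type*} [NormedAddCommGroup H] [InnerProductSpace ℂ H]

/-- Co-injectivity of a partial map `Z → Option Z`. -/
def Coinj (s : Z → Option Z) : Prop :=
  ∀ u u' v, s u = some v → s u' = some v → u = u'

/-- The raw shifted function. -/
def shiftFun (s : Z → Option Z) (b : H →L[ℂ] H) (ξ : L2 Z H) (u : Z) : H :=
  (s u).elim 0 (fun v => b (ξ v))

theorem shift_sum_le (s : Z → Option Z) (hs : Coinj s) (b : H →L[ℂ] H) (ξ : L2 Z H)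
    (F : Finset Z) :
    ∑ u ∈ F, ‖shiftFun s b ξ u‖ ^ (2:ℕ) ≤ (‖b‖ * ‖ξ‖) ^ (2:ℕ) := by
  classical
  have hnn : (0:ℝ) ≤ ‖b‖ := norm_nonneg _
  set F' : Finset Z := F.filter (fun u => (s u).isSome) with hF'
  have h1 : ∑ u ∈ F, ‖shiftFun s b ξ u‖ ^ (2:ℕ) = ∑ u ∈ F', ‖shiftFun s b ξ u‖ ^ (2:ℕ) := by
    refine (Finset.sum_filter_of_ne ?_).symm
    intro u _ hne
    by_contra h
    rw [Option.not_isSome_iff_eq_none] at h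
    exact hne (by simp [shiftFun, h])
  -- the partial map as a function on F'
  have key : ∀ u ∈ F', ∃ v, s u = some v := by
    intro u hu
    rw [hF', Finset.mem_filter] at hu
    exact Option.isSome_iff_exists.mp hu.2
  set g : Z → Z := fun u => ((s u).getD u) with hg
  have hgs : ∀ u ∈ F', s u = some (g u) := by
    intro u hu
    obtain ⟨v, hv⟩ := key u hu
    simp [hg, hv]
  have hinj : Set.InjOn g F' := by
    intro u hu u' hu' h
    exact hs u u' (g u) (hgs u hu) (h ▸ hgs u' hu')
  have h2 : ∀ u ∈ F', ‖shiftFun s b ξ u‖ ^ (2:ℕ) ≤ ‖b‖ ^ (2:ℕ) * ‖ξ (g u)‖ ^ (2:ℕ) := by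
    intro u hu
    have : shiftFun s b ξ u = b (ξ (g u)) := by simp [shiftFun, hgs u hu]
    rw [this, ← mul_pow]
    exact pow_le_pow_left₀ (norm_nonneg _) (b.le_opNorm _) 2
  calc ∑ u ∈ F, ‖shiftFun s b ξ u‖ ^ (2:ℕ)
      = ∑ u ∈ F', ‖shiftFun s b ξ u‖ ^ (2:ℕ) := h1
    _ ≤ ∑ u ∈ F', ‖b‖ ^ (2:ℕ) * ‖ξ (g u)‖ ^ (2:ℕ) := Finset.sum_le_sum h2
    _ = ‖b‖ ^ (2:ℕ) * ∑ u ∈ F', ‖ξ (g u)‖ ^ (2:ℕ) := by rw [Finset.mul_sum]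
    _ = ‖b‖ ^ (2:ℕ) * ∑ v ∈ F'.image g, ‖ξ v‖ ^ (2:ℕ) := by
        rw [Finset.sum_image (fun u hu u' hu' h => hinj hu hu' h)]
    _ ≤ ‖b‖ ^ (2:ℕ) * ‖ξ‖ ^ (2:ℕ) := by
        refine mul_le_mul_of_nonneg_left (sum_sq_le ξ _) (by positivity)
    _ = (‖b‖ * ‖ξ‖) ^ (2:ℕ) := (mul_pow _ _ _).symm

theorem shift_memℓp (s : Z → Option Z) (hs : Coinj s) (b : H →L[ℂ] H) (ξ : L2 Z H) :
    Memℓp (shiftFun s b ξ) 2 := by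
  refine memℓp_gen' (C := (‖b‖ * ‖ξ‖) ^ (2:ℕ)) ?_
  intro F
  calc ∑ u ∈ F, ‖shiftFun s b ξ u‖ ^ ((2:ℝ≥0∞).toReal)
      = ∑ u ∈ F, ‖shiftFun s b ξ u‖ ^ (2:ℕ) :=
        Finset.sum_congr rfl fun u _ => rpow_two_eq _
    _ ≤ (‖b‖ * ‖ξ‖) ^ (2:ℕ) := shift_sum_le s hs b ξ F

/-- The bounded operator on `ℓ²(Z,H)` given by a co-injective partial translation `s`
with coefficient `b`. -/
def shiftOp (s : Z → Option Z) (hs : Coinj s) (b : H →L[ℂ] H) :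
    L2 Z H →L[ℂ] L2 Z H :=
  LinearMap.mkContinuous
    { toFun := fun ξ => (⟨shiftFun s b ξ, shift_memℓp s hs b ξ⟩ : L2 Z H)
      map_add' := by
        intro ξ η
        apply lp.ext
        funext u
        show shiftFun s b (ξ + η) u = _
        have : (↑(ξ + η) : Z → H) = fun z => ξ z + η z := by
          funext z; exact lp.coeFn_add ξ η ▸ rfl
        simp only [shiftFun, this]
        show _ = shiftFun s b ξ u + shiftFun s b η u
        cases hsu : s u with
        | none => simp [shiftFun, hsu, Pi.add_apply]
        | some v => simp [shiftFun, hsu, map_add, Pi.add_apply]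
      map_smul' := by
        intro c ξ
        apply lp.ext
        funext u
        show shiftFun s b (c • ξ) u = _
        have : (↑(c • ξ) : Z → H) = fun z => c • ξ z := by
          funext z; exact lp.coeFn_smul c ξ ▸ rfl
        simp only [shiftFun, this]
        cases hsu : s u with
        | none => simp [shiftFun, hsu]
        | some v => simp [shiftFun, hsu, map_smul] }
    ‖b‖
    (by
      intro ξ
      show ‖(⟨shiftFun s b ξ, shift_memℓp s hs b ξ⟩ : L2 Z H)‖ ≤ ‖b‖ * ‖ξ‖
      refine lp.norm_le_of_forall_sum_le (by norm_num) (by positivity) ?_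
      intro F
      calc ∑ u ∈ F, ‖shiftFun s b ξ u‖ ^ ((2:ℝ≥0∞).toReal)
          = ∑ u ∈ F, ‖shiftFun s b ξ u‖ ^ (2:ℕ) :=
            Finset.sum_congr rfl fun u _ => rpow_two_eq _
        _ ≤ (‖b‖ * ‖ξ‖) ^ (2:ℕ) := shift_sum_le s hs b ξ F
        _ = (‖b‖ * ‖ξ‖) ^ ((2:ℝ≥0∞).toReal) := (rpow_two_eq _).symm)

theorem shiftOp_apply (s : Z → Option Z) (hs : Coinj s) (b : H →L[ℂ] H) (ξ : L2 Z H)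
    (u : Z) : (shiftOp s hs b ξ) u = shiftFun s b ξ u := rfl

theorem entry_shiftOp_some (s : Z → Option Z) (hs : Coinj s) (b : H →L[ℂ] H)
    {u v : Z} (h : s u = some v) : Roe.entry (shiftOp s hs b) u v = b := by
  classical
  ext w
  rw [entry_apply, shiftOp_apply]
  simp only [shiftFun, h, Option.elim_some]
  rw [lp.single_apply_self]

theorem entry_shiftOp_ne (s : Z → Option Z) (hs : Coinj s) (b : H →L[ℂ] H)
    {u v : Z} (h : s u ≠ some v) : Roe.entry (shiftOp s hs b) u v = 0 := by
  classical
  ext w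
  rw [entry_apply, shiftOp_apply]
  simp only [shiftFun]
  cases hsu : s u with
  | none => simp
  | some v' =>
      have hne : v' ≠ v := by rintro rfl; exact h hsu
      simp only [Option.elim_some]
      rw [lp.single_apply_ne _ _ _ hne]
      simp

end Aux


namespace Aux

/-! Graph distance lemmas. -/

theorem gdist_nonneg {V : Type*} (G : SimpleGraph V) (u v : V) : 0 ≤ gdist G u v :=
  Nat.cast_nonneg _

theorem gdist_comm {V : Type*} (G : SimpleGraph V) (u v : V) : gdist G u v = gdist G v u := by
  unfold gdist; rw [SimpleGraph.dist_comm]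

theorem gdist_self {V : Type*} (G : SimpleGraph V) (u : V) : gdist G u u = 0 := by
  unfold gdist; rw [SimpleGraph.dist_self]; norm_num

theorem gdist_triangle {V : Type*} {G : SimpleGraph V} (hc : G.Connected) (u v w : V) :
    gdist G u w ≤ gdist G u v + gdist G v w := by
  unfold gdist
  rw [← Nat.cast_add]
  exact_mod_cast hc.dist_triangle

theorem gdist_eq_zero {V : Type*} {G : SimpleGraph V} (hc : G.Connected) {u v : V}
    (h : gdist G u v = 0) : u = v := by
  unfold gdist at h
  exact (hc.dist_eq_zero_iff.mp (by exact_mod_cast h))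

theorem gdist_le_one_of_adj {V : Type*} {G : SimpleGraph V} {u v : V} (h : G.Adj u v) :
    gdist G u v ≤ 1 := by
  unfold gdist
  have := SimpleGraph.dist_le (SimpleGraph.Walk.cons h SimpleGraph.Walk.nil)
  simp only [SimpleGraph.Walk.length_cons, SimpleGraph.Walk.length_nil] at this
  exact_mod_cast this

/-- In a graph covering a finite graph by a `K`-metric cover with `K ≥ 2`, all balls are
finite. -/
theorem ball_finite {W V : Type*} [Fintype V] {G' : SimpleGraph W}
    (hc : G'.Connected) {d : V → V → ℝ} {π : W → V} {K : ℝ} (hK : (2:ℝ) ≤ K)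
    (hcov : IsMetricCover (gdist G') d π K) (u : W) (r : ℝ) :
    {v : W | gdist G' u v ≤ r}.Finite := by
  -- radius-one balls are finite
  have h1 : ∀ w : W, {v : W | G'.Adj w v}.Finite := by
    intro w
    have hinj : Set.InjOn π {v : W | gdist G' w v < K} := ((hcov.2 w).1).injOn
    have hsub : {v : W | G'.Adj w v} ⊆ {v : W | gdist G' w v < K} := by
      intro v hv
      exact lt_of_le_of_lt (gdist_le_one_of_adj hv) (by linarith)
    refine Set.Finite.subset ?_ hsub
    have : Set.Finite (π '' {v : W | gdist G' w v < K}) := Set.toFinite _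
    exact Set.Finite.of_finite_image this hinj
  -- balls of natural-number radius are finite, by induction
  have h2 : ∀ (k : ℕ) (w : W), {v : W | ∃ p : G'.Walk w v, p.length ≤ k}.Finite := by
    intro k
    induction k with
    | zero =>
        intro w
        refine Set.Finite.subset (Set.finite_singleton w) ?_
        rintro v ⟨p, hp⟩
        have := SimpleGraph.Walk.eq_of_length_eq_zero (Nat.le_zero.mp hp)
        exact this ▸ rfl
    | succ k ih =>
        intro w
        have : {v : W | ∃ p : G'.Walk w v, p.length ≤ k + 1} ⊆
            {w} ∪ ⋃ x ∈ {v : W | G'.Adj w v}, {v : W | ∃ p : G'.Walk x v, p.length ≤ k} := by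
          rintro v ⟨p, hp⟩
          cases p with
          | nil => exact Or.inl rfl
          | @cons _ x _ h q =>
              refine Or.inr ?_
              refine Set.mem_biUnion (show x ∈ {v : W | G'.Adj w v} from h) ?_
              exact ⟨q, by simpa using Nat.lt_succ_iff.mp (Nat.lt_succ_of_le (by
                simpa [SimpleGraph.Walk.length_cons] using hp))⟩
        refine Set.Finite.subset ?_ this
        exact (Set.finite_singleton w).union ((h1 w).biUnion (fun x _ => ih x))
  -- conclude
  rcases le_or_gt r 0 with hr | hr
  · by_cases hr0 : r < 0
    · refine Set.Finite.subset (Set.finite_empty) ?_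
      intro v hv
      exact absurd (le_trans (gdist_nonneg G' u v) hv) (not_le.mpr hr0)
    · have hr' : r = 0 := le_antisymm hr (not_lt.mp hr0)
      refine Set.Finite.subset (Set.finite_singleton u) ?_
      intro v hv
      rw [hr'] at hv
      have := le_antisymm hv (gdist_nonneg G' u v)
      exact (gdist_eq_zero hc this).symm ▸ rfl
  · obtain ⟨k, hk⟩ := exists_nat_ge r
    refine Set.Finite.subset (h2 k u) ?_
    intro v hv
    have hreach : G'.Reachable u v := hc u v
    obtain ⟨p, hp⟩ := hreach.exists_walk_length_eq_dist
    refine ⟨p, ?_⟩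
    rw [hp]
    have : (G'.dist u v : ℝ) ≤ k := le_trans hv hk
    exact_mod_cast this

end Aux

/-- under asymptotic faithfulness and uniform operator norm localization of
the covers, if T is a locally compact ghost operator of propagation at most R, then its
block lifts are defined for all large n and their norms tend to 0. -/
theorem ghost_lift_norms_tend_to_zero
    (H₀ : Type) [NormedAddCommGroup H₀] [InnerProductSpace ℂ H₀] [CompleteSpace H₀]
    [TopologicalSpace.SeparableSpace H₀] (hinf : ¬ FiniteDimensional ℂ H₀)
    -- a space of graphs X = ⊔ₙ Gₙ
    (V : ℕ → Type) [∀ n, Fintype (V n)] (G : ∀ n, SimpleGraph (V n))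
    (hconn : ∀ n, (G n).Connected)
    [MetricSpace (Σ k, V k)]
    (hrestr : ∀ (n : ℕ) (u v : V n), dist (⟨n, u⟩ : Σ k, V k) ⟨n, v⟩ = gdist (G n) u v)
    (hsep : ∀ C : ℝ, ∃ N : ℕ, ∀ m n : ℕ, m ≠ n → N ≤ m + n →
      ∀ (u : V m) (v : V n), C ≤ dist (⟨m, u⟩ : Σ k, V k) ⟨n, v⟩)
    -- a Galois covering sequence (G̃ₙ → Gₙ) with deck groups Γₙ
    (W : ℕ → Type) (G' : ∀ n, SimpleGraph (W n)) (hconn' : ∀ n, (G' n).Connected)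
    (Γ : ℕ → Type) [∀ n, Group (Γ n)] [∀ n, MulAction (Γ n) (W n)]
    (hact : ∀ (n : ℕ) (γ : Γ n) (u v : W n), (G' n).Adj (γ • u) (γ • v) ↔ (G' n).Adj u v)
    (hfree : ∀ (n : ℕ) (γ : Γ n) (u : W n), γ • u = u → γ = 1)
    (π : ∀ n, W n → V n) (hπ : ∀ n, Function.Surjective (π n))
    (hfib : ∀ (n : ℕ) (u v : W n), π n u = π n v ↔ ∃ γ : Γ n, γ • u = v)
    (hquot : ∀ (n : ℕ) (x y : V n),
      (G n).Adj x y ↔ ∃ u v : W n, π n u = x ∧ π n v = y ∧ (G' n).Adj u v)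
    -- asymptotic faithfulness
    (hfaith : ∀ R : ℝ, 0 < R → ∃ N : ℕ, ∀ n : ℕ, N ≤ n →
      IsMetricCover (gdist (G' n)) (gdist (G n)) (π n) R)
    -- uniform operator norm localization for the covers, with constant c
    (c : ℝ) (hc0 : 0 < c) (hc1 : c ≤ 1)
    (honl : ∀ R : ℝ, 0 < R → ∃ S : ℝ, 0 < S ∧
      ∀ (n : ℕ) (A : L2 (W n) H₀ →L[ℂ] L2 (W n) H₀),
        Roe.LocallyCompact (gdist (G' n)) A → Roe.PropagationLE (gdist (G' n)) A R →
        ∃ ξ : L2 (W n) H₀, ‖ξ‖ = 1 ∧ Roe.SupportDiamLE (gdist (G' n)) ξ S ∧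
          c * ‖A‖ ≤ ‖A ξ‖) :
    ∀ (T : L2 (Σ k, V k) H₀ →L[ℂ] L2 (Σ k, V k) H₀) (R : ℝ),
      Roe.LocallyCompact (fun x y : Σ k, V k => dist x y) T →
      Roe.PropagationLE (fun x y : Σ k, V k => dist x y) T R →
      Roe.IsGhost (fun x y : Σ k, V k => dist x y) T →
      (∃ N₀ : ℕ, ∀ n : ℕ, N₀ ≤ n →
        ∃ T' : L2 (W n) H₀ →L[ℂ] L2 (W n) H₀, IsBlockLift (π n) (gdist (G' n)) T R T') ∧
      ∀ ε : ℝ, 0 < ε → ∃ N : ℕ, ∀ n : ℕ, N ≤ n →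
        ∀ T' : L2 (W n) H₀ →L[ℂ] L2 (W n) H₀,
          IsBlockLift (π n) (gdist (G' n)) T R T' → ‖T'‖ < ε := by
  classical
  intro T R hlc hprop hghost
  set R' : ℝ := max R 1 with hR'def
  have hR'pos : (0:ℝ) < R' := lt_of_lt_of_le one_pos (le_max_right _ _)
  have hRR' : R ≤ R' := le_max_left _ _
  constructor
  · -- existence of block lifts
    set K₁ : ℝ := 2 * R' + 2 with hK₁def
    have hK₁pos : (0:ℝ) < K₁ := by positivity
    obtain ⟨N₀, hN₀⟩ := hfaith K₁ hK₁pos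
    refine ⟨N₀, fun n hn => ?_⟩
    have hcov := hN₀ n hn
    have hinjball : ∀ u : W n, Set.InjOn (π n) {w | gdist (G' n) u w < K₁} :=
      fun u => ((hcov.2 u).1).injOn
    -- the partial translation associated to a pair (x, y)
    set sfun : V n → V n → W n → Option (W n) := fun x y u =>
      if h : π n u = x ∧ ∃ v, π n v = y ∧ gdist (G' n) u v ≤ R then some h.2.choose
      else none with hsfun
    have hs_spec : ∀ x y u v, sfun x y u = some v →
        π n u = x ∧ π n v = y ∧ gdist (G' n) u v ≤ R := by
      intro x y u v h
      simp only [hsfun] at h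
      by_cases hcond : π n u = x ∧ ∃ v', π n v' = y ∧ gdist (G' n) u v' ≤ R
      · rw [dif_pos hcond] at h
        have hv := Option.some.inj h
        have hspec := hcond.2.choose_spec
        rw [hv] at hspec
        exact ⟨hcond.1, hspec.1, hspec.2⟩
      · rw [dif_neg hcond] at h
        exact absurd h (by simp)
    have hs_some : ∀ x y u (h : π n u = x ∧ ∃ v, π n v = y ∧ gdist (G' n) u v ≤ R),
        sfun x y u = some h.2.choose := by
      intro x y u h
      simp only [hsfun]
      rw [dif_pos h]
    have hcoinj : ∀ x y : V n, Aux.Coinj (sfun x y) := by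
      intro x y u u' v h h'
      obtain ⟨h1, h2, h3⟩ := hs_spec x y u v h
      obtain ⟨h1', h2', h3'⟩ := hs_spec x y u' v h'
      refine hinjball v ?_ ?_ (h1.trans h1'.symm)
      · show gdist (G' n) v u < K₁
        rw [Aux.gdist_comm]
        calc gdist (G' n) u v ≤ R := h3
          _ < K₁ := by rw [hK₁def]; linarith [hRR']
      · show gdist (G' n) v u' < K₁
        rw [Aux.gdist_comm]
        calc gdist (G' n) u' v ≤ R := h3'
          _ < K₁ := by rw [hK₁def]; linarith [hRR']
    refine ⟨∑ p : V n × V n, Aux.shiftOp (sfun p.1 p.2) (hcoinj p.1 p.2)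
      (Roe.entry T ⟨n, p.1⟩ ⟨n, p.2⟩), ?_⟩
    intro u v
    rw [Aux.entry_sum]
    constructor
    · -- d' u v ≤ R : entry equals downstairs entry
      intro hd
      rw [Finset.sum_eq_single_of_mem (π n u, π n v) (Finset.mem_univ _)]
      · refine Aux.entry_shiftOp_some _ _ _ ?_
        have hcond : π n u = π n u ∧ ∃ v', π n v' = π n v ∧ gdist (G' n) u v' ≤ R :=
          ⟨rfl, v, rfl, hd⟩
        rw [hs_some _ _ u hcond]
        congr 1
        have hspec := hcond.2.choose_spec
        refine hinjball u ?_ ?_ (hspec.1.trans rfl)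
        · show gdist (G' n) u hcond.2.choose < K₁
          calc gdist (G' n) u hcond.2.choose ≤ R := hspec.2
            _ < K₁ := by rw [hK₁def]; linarith [hRR']
        · show gdist (G' n) u v < K₁
          calc gdist (G' n) u v ≤ R := hd
            _ < K₁ := by rw [hK₁def]; linarith [hRR']
      · intro p _ hne
        refine Aux.entry_shiftOp_ne _ _ _ ?_
        intro hsome
        obtain ⟨h1, h2, _⟩ := hs_spec p.1 p.2 u v hsome
        exact hne (Prod.ext h1.symm h2.symm)
    · -- R < d' u v : entry vanishes
      intro hd
      refine Finset.sum_eq_zero ?_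
      intro p _
      refine Aux.entry_shiftOp_ne _ _ _ ?_
      intro hsome
      obtain ⟨_, _, h3⟩ := hs_spec p.1 p.2 u v hsome
      exact absurd h3 (not_le.mpr hd)
  · -- norms tend to zero
    intro ε hε
    obtain ⟨S, hSpos, honlS⟩ := honl R' hR'pos
    set K₂ : ℝ := 2 * S + 2 * R' + 4 with hK₂def
    have hK₂pos : (0:ℝ) < K₂ := by positivity
    obtain ⟨N₁, hN₁⟩ := hfaith K₂ hK₂pos
    have hcε : (0:ℝ) < c * ε := mul_pos hc0 hε
    obtain ⟨B, hBbdd, hBsmall⟩ := hghost (S + 1) (by linarith) (c * ε) hcε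
    obtain ⟨C, hC⟩ := hBbdd
    have hM : ∃ M : ℕ, ∀ z ∈ B, z.1 ≤ M := by
      rcases Set.eq_empty_or_nonempty B with hB0 | ⟨z₀, hz₀⟩
      · exact ⟨0, fun z hz => absurd hz (hB0 ▸ Set.notMem_empty z)⟩
      · obtain ⟨N₂, hN₂⟩ := hsep (C + 1)
        refine ⟨max z₀.1 N₂, fun z hz => ?_⟩
        by_contra hcon
        push_neg at hcon
        have hne : z.1 ≠ z₀.1 := by
          intro h; rw [h] at hcon; exact absurd (le_max_left z₀.1 N₂) (not_le.mpr hcon)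
        have hsum : N₂ ≤ z.1 + z₀.1 :=
          le_trans (le_trans (le_max_right _ _) (le_of_lt hcon)) (Nat.le_add_right _ _)
        have hfar := hN₂ z.1 z₀.1 hne hsum z.2 z₀.2
        have hnear := hC z hz z₀ hz₀
        rw [Sigma.eta, Sigma.eta] at hfar
        linarith
    obtain ⟨M, hMle⟩ := hM
    refine ⟨max N₁ (M + 1), fun n hn T' hlift => ?_⟩
    have hnN₁ : N₁ ≤ n := le_trans (le_max_left _ _) hn
    have hnM : M + 1 ≤ n := le_trans (le_max_right _ _) hn
    have hcov := hN₁ n hnN₁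
    have hball := Aux.ball_finite (hconn' n)
      (show (2:ℝ) ≤ K₂ by rw [hK₂def]; linarith) hcov
    have hprop' : Roe.PropagationLE (gdist (G' n)) T' R' := fun u v h =>
      (hlift u v).2 (lt_of_le_of_lt hRR' h)
    have hlc' : Roe.LocallyCompact (gdist (G' n)) T' := by
      constructor
      · intro u v
        by_cases h : gdist (G' n) u v ≤ R
        · rw [(hlift u v).1 h]; exact hlc.1 _ _
        · rw [(hlift u v).2 (not_le.mp h)]; exact isCompactOperator_zero
      · intro B' hB'
        obtain ⟨C', hC'⟩ := hB'
        rcases Set.eq_empty_or_nonempty B' with h0 | ⟨u₁, hu₁⟩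
        · refine Set.Finite.subset (Set.finite_empty) ?_
          rintro ⟨u, v⟩ ⟨hu, _, _⟩
          exact absurd hu (h0 ▸ Set.notMem_empty u)
        · refine Set.Finite.subset (Set.Finite.prod (hball u₁ C') (hball u₁ C')) ?_
          rintro ⟨u, v⟩ ⟨hu, hv, _⟩
          exact ⟨hC' u₁ hu₁ u hu, hC' u₁ hu₁ v hv⟩
    obtain ⟨ξ, hξnorm, hξdiam, hξlow⟩ := honlS n T' hlc' hprop'
    have hu₀ : ∃ u₀ : W n, ξ u₀ ≠ 0 := by
      by_contra hcon
      push_neg at hcon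
      have : ξ = 0 := by
        apply lp.ext; funext z; rw [hcon z]; rfl
      rw [this] at hξnorm; simp at hξnorm
    obtain ⟨u₀, hu₀⟩ := hu₀
    have hsupp : {v : W n | ξ v ≠ 0} ⊆ {v | gdist (G' n) u₀ v ≤ S} :=
      fun v hv => hξdiam u₀ v hu₀ hv
    have hFfin : {v : W n | ξ v ≠ 0}.Finite := (hball u₀ S).subset hsupp
    set F : Finset (W n) := hFfin.toFinset with hFdef
    have hFmem : ∀ z, ξ z ≠ 0 → z ∈ F := fun z hz => hFfin.mem_toFinset.mpr hz
    have hFball : ∀ v ∈ F, gdist (G' n) u₀ v ≤ S := fun v hv =>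
      hsupp (hFfin.mem_toFinset.mp hv)
    have hinjK : Set.InjOn (π n) {w | gdist (G' n) u₀ w < K₂} := ((hcov.2 u₀).1).injOn
    have hisoK : ∀ w w', gdist (G' n) u₀ w < K₂ → gdist (G' n) u₀ w' < K₂ →
        gdist (G n) (π n w) (π n w') = gdist (G' n) w w' := (hcov.2 u₀).2
    set e : W n → (Σ k, V k) := fun v => (⟨n, π n v⟩ : Σ k, V k) with hedef
    have he_inj : ∀ v v', gdist (G' n) u₀ v < K₂ → gdist (G' n) u₀ v' < K₂ →
        e v = e v' → v = v' := by
      intro v v' hv hv' h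
      refine hinjK hv hv' ?_
      simp only [hedef] at h
      exact eq_of_heq (Sigma.mk.inj_iff.mp h).2
    have hSK : S < K₂ := by rw [hK₂def]; linarith
    have hSRK : S + R' + 1 < K₂ := by rw [hK₂def]; linarith
    have hinjF : ∀ v ∈ F, ∀ v' ∈ F, e v = e v' → v = v' := fun v hv v' hv' h =>
      he_inj v v' (lt_of_le_of_lt (hFball v hv) hSK)
        (lt_of_le_of_lt (hFball v' hv') hSK) h
    set η : L2 (Σ k, V k) H₀ := ∑ v ∈ F, lp.single 2 (e v) (ξ v) with hηdef
    have hηe : ∀ v ∈ F, η (e v) = ξ v := by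
      intro v hv
      rw [hηdef, lp.coeFn_sum]
      simp only [Finset.sum_apply]
      rw [Finset.sum_eq_single_of_mem v hv]
      · exact lp.single_apply_self (E := fun _ : (Σ k, V k) => H₀) 2 (e v) (ξ v)
      · intro v' hv' hne
        refine lp.single_apply_ne (E := fun _ : (Σ k, V k) => H₀) 2 (e v') (ξ v') ?_
        intro h
        exact hne (hinjF v' hv' v hv h.symm)
    have hηsupp0 : ∀ z, η z ≠ 0 → z ∈ F.image e := by
      intro z hz
      by_contra hcon
      apply hz
      rw [hηdef, lp.coeFn_sum]
      simp only [Finset.sum_apply]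
      refine Finset.sum_eq_zero fun v hv => ?_
      refine lp.single_apply_ne (E := fun _ : (Σ k, V k) => H₀) 2 (e v) (ξ v) ?_
      intro h
      exact hcon (h ▸ Finset.mem_image_of_mem e hv)
    set f : (Σ k, V k) → H₀ :=
      fun z => if h : ∃ v, v ∈ F ∧ e v = z then ξ h.choose else 0 with hfdef
    have hfe : ∀ v ∈ F, f (e v) = ξ v := by
      intro v hv
      have h : ∃ v', v' ∈ F ∧ e v' = e v := ⟨v, hv, rfl⟩
      simp only [hfdef]
      rw [dif_pos h]
      have hspec := h.choose_spec
      rw [hinjF _ hspec.1 v hv hspec.2]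
    have hη_image : (∑ z ∈ F.image e, lp.single 2 z (f z) : L2 (Σ k, V k) H₀) = η := by
      rw [Finset.sum_image hinjF, hηdef]
      exact Finset.sum_congr rfl fun v hv => by rw [hfe v hv]
    have hηnorm : ‖η‖ = 1 := by
      have h1 : ‖η‖ ^ (2:ℕ) = 1 := by
        rw [← hη_image, Aux.norm_sq_sum_single, Finset.sum_image hinjF]
        have h2 : ∀ v ∈ F, ‖f (e v)‖ ^ (2:ℕ) = ‖ξ v‖ ^ (2:ℕ) := fun v hv => by
          rw [hfe v hv]
        rw [Finset.sum_congr rfl h2, ← Aux.norm_sq_eq_sum ξ F hFmem, hξnorm]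
        norm_num
      nlinarith [norm_nonneg η]
    have hTη : ‖T η‖ < c * ε := by
      refine hBsmall η hηnorm ⟨⟨n, π n u₀⟩, ?_, ?_⟩
      · intro hmem
        have h1 : n ≤ M := hMle _ hmem
        omega
      · intro z hz
        obtain ⟨v, hv, rfl⟩ := Finset.mem_image.mp (hηsupp0 z hz)
        show dist (⟨n, π n u₀⟩ : Σ k, V k) (e v) < S + 1
        simp only [hedef]
        rw [hrestr]
        rw [hisoK u₀ v (by rw [Aux.gdist_self]; exact hK₂pos)
          (lt_of_le_of_lt (hFball v hv) hSK)]
        exact lt_of_le_of_lt (hFball v hv) (by linarith)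
    have hkey : ∀ u : W n, gdist (G' n) u₀ u < K₂ → T' ξ u = T η (e u) := by
      intro u hu
      rw [Aux.apply_eq_sum_entry T' ξ F hFmem u,
          Aux.apply_eq_sum_entry T η (F.image e) hηsupp0 (e u),
          Finset.sum_image hinjF]
      refine Finset.sum_congr rfl fun v hv => ?_
      rw [hηe v hv]
      by_cases hle : gdist (G' n) u v ≤ R
      · rw [(hlift u v).1 hle]
      · rw [(hlift u v).2 (not_le.mp hle)]
        have hdist : R < dist (e u) (e v) := by
          simp only [hedef]
          rw [hrestr, hisoK u v hu (lt_of_le_of_lt (hFball v hv) hSK)]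
          exact not_le.mp hle
        rw [hprop (e u) (e v) hdist]
    have hvanish : ∀ u : W n, ¬ (gdist (G' n) u₀ u ≤ S + R') → T' ξ u = 0 := by
      intro u hu
      rw [Aux.apply_eq_sum_entry T' ξ F hFmem u]
      refine Finset.sum_eq_zero fun v hv => ?_
      have hR : R < gdist (G' n) u v := by
        by_contra hcon
        push_neg at hcon
        apply hu
        calc gdist (G' n) u₀ u ≤ gdist (G' n) u₀ v + gdist (G' n) v u :=
              Aux.gdist_triangle (hconn' n) _ _ _
          _ ≤ S + R' := by
              have h1 := hFball v hv
              have h2 : gdist (G' n) v u ≤ R := by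
                rw [Aux.gdist_comm]; exact hcon
              linarith [hRR']
      rw [(hlift u v).2 hR]
      rfl
    set BS : Finset (W n) := (hball u₀ (S + R')).toFinset with hBSdef
    have hBSball : ∀ u ∈ BS, gdist (G' n) u₀ u < K₂ := by
      intro u hu
      have := (hball u₀ (S + R')).mem_toFinset.mp hu
      exact lt_of_le_of_lt this (by rw [hK₂def]; linarith)
    have hinjBS : ∀ u ∈ BS, ∀ u' ∈ BS, e u = e u' → u = u' := fun u hu u' hu' h =>
      he_inj u u' (hBSball u hu) (hBSball u' hu') h
    have hcompsq : ‖T' ξ‖ ^ (2:ℕ) ≤ ‖T η‖ ^ (2:ℕ) := by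
      have h1 : ‖T' ξ‖ ^ (2:ℕ) = ∑ u ∈ BS, ‖T' ξ u‖ ^ (2:ℕ) := by
        refine Aux.norm_sq_eq_sum _ BS ?_
        intro z hz
        refine (hball u₀ (S + R')).mem_toFinset.mpr ?_
        by_contra hcon
        exact hz (hvanish z hcon)
      rw [h1]
      have h2 : ∀ u ∈ BS, ‖T' ξ u‖ ^ (2:ℕ) = ‖T η (e u)‖ ^ (2:ℕ) := fun u hu => by
        rw [hkey u (hBSball u hu)]
      rw [Finset.sum_congr rfl h2, ← Finset.sum_image (f := fun z => ‖T η z‖ ^ (2:ℕ)) hinjBS]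
      exact Aux.sum_sq_le _ _
    have hcomp : ‖T' ξ‖ ≤ ‖T η‖ := by
      have h1 : ‖T' ξ‖ = Real.sqrt (‖T' ξ‖ ^ (2:ℕ)) := (Real.sqrt_sq (norm_nonneg _)).symm
      have h2 : Real.sqrt (‖T η‖ ^ (2:ℕ)) = ‖T η‖ := Real.sqrt_sq (norm_nonneg _)
      rw [h1, ← h2]
      exact Real.sqrt_le_sqrt hcompsq
    have hfinal : c * ‖T'‖ < c * ε := lt_of_le_of_lt (le_trans hξlow hcomp) hTη
    exact lt_of_mul_lt_mul_left hfinal (le_of_lt hc0)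

end
end

section
/- Let G be a connected simple graph with infinitely many vertices in which every vertex has degree at least 1 and at most k. Then the normalized Laplacian Δ of G defines a bounded operator on ℓ²(V(G)), and this operator is injective; in particular 0 is not an eigenvalue of Δ. -/
noncomputable section

open scoped ENNReal

/-- Key Schur-type estimate for the normalized Laplacian. -/
lemma lap_partial_sum_bound {V : Type} (G : SimpleGraph V) [∀ v : V, Fintype (G.neighborSet v)]
    (k : ℕ) (hdeg₁ : ∀ v : V, 1 ≤ G.degree v) (hdegk : ∀ v : V, G.degree v ≤ k)
    (f : V → ℂ) {C : ℝ} (hC : ∀ s : Finset V, ∑ x ∈ s, ‖f x‖ ^ 2 ≤ C)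
    (s : Finset V) :
    ∑ x ∈ s, ‖f x - ∑ y ∈ G.neighborFinset x,
        f y / (Real.sqrt ((G.degree x : ℝ) * (G.degree y : ℝ)) : ℂ)‖ ^ 2
      ≤ (2 + 2 * (k : ℝ) ^ 2) * C := by
  classical
  have hC0 : 0 ≤ C := le_trans (by simp) (hC ∅)
  have hA : ∀ x : V, ‖∑ y ∈ G.neighborFinset x,
      f y / (Real.sqrt ((G.degree x : ℝ) * (G.degree y : ℝ)) : ℂ)‖
      ≤ ∑ y ∈ G.neighborFinset x, ‖f y‖ := by
    intro x
    refine le_trans (norm_sum_le _ _) (Finset.sum_le_sum fun y hy => ?_)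
    have h1 : (1:ℝ) ≤ Real.sqrt ((G.degree x : ℝ) * (G.degree y : ℝ)) := by
      rw [show (1:ℝ) = Real.sqrt 1 by simp]
      apply Real.sqrt_le_sqrt
      have hx : (1:ℝ) ≤ (G.degree x : ℝ) := by exact_mod_cast hdeg₁ x
      have hy' : (1:ℝ) ≤ (G.degree y : ℝ) := by exact_mod_cast hdeg₁ y
      nlinarith
    rw [norm_div]
    have hn : ‖((Real.sqrt ((G.degree x : ℝ) * (G.degree y : ℝ)) : ℝ) : ℂ)‖
        = Real.sqrt ((G.degree x : ℝ) * (G.degree y : ℝ)) := by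
      rw [Complex.norm_real, Real.norm_eq_abs, abs_of_nonneg (Real.sqrt_nonneg _)]
    rw [hn]
    exact div_le_self (norm_nonneg _) h1
  have hpt : ∀ x : V, ‖f x - ∑ y ∈ G.neighborFinset x,
      f y / (Real.sqrt ((G.degree x : ℝ) * (G.degree y : ℝ)) : ℂ)‖ ^ 2
      ≤ 2 * ‖f x‖ ^ 2 + 2 * (k:ℝ) * ∑ y ∈ G.neighborFinset x, ‖f y‖ ^ 2 := by
    intro x
    have h1 : ‖f x - ∑ y ∈ G.neighborFinset x,
        f y / (Real.sqrt ((G.degree x : ℝ) * (G.degree y : ℝ)) : ℂ)‖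
        ≤ ‖f x‖ + ∑ y ∈ G.neighborFinset x, ‖f y‖ :=
      le_trans (norm_sub_le _ _) (by linarith [hA x])
    have h2 : (∑ y ∈ G.neighborFinset x, ‖f y‖) ^ 2
        ≤ (k:ℝ) * ∑ y ∈ G.neighborFinset x, ‖f y‖ ^ 2 := by
      refine le_trans sq_sum_le_card_mul_sum_sq ?_
      have hcard : ((G.neighborFinset x).card : ℝ) ≤ (k:ℝ) := by
        rw [SimpleGraph.card_neighborFinset_eq_degree]; exact_mod_cast hdegk x
      have hnn : 0 ≤ ∑ y ∈ G.neighborFinset x, ‖f y‖ ^ 2 :=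
        Finset.sum_nonneg fun y _ => sq_nonneg _
      exact mul_le_mul_of_nonneg_right hcard hnn
    have h0 : 0 ≤ ‖f x - ∑ y ∈ G.neighborFinset x,
        f y / (Real.sqrt ((G.degree x : ℝ) * (G.degree y : ℝ)) : ℂ)‖ := norm_nonneg _
    have hs0 : 0 ≤ ∑ y ∈ G.neighborFinset x, ‖f y‖ :=
      Finset.sum_nonneg fun y _ => norm_nonneg _
    nlinarith [sq_nonneg (‖f x‖ - ∑ y ∈ G.neighborFinset x, ‖f y‖), norm_nonneg (f x)]
  have hswap : ∑ x ∈ s, ∑ y ∈ G.neighborFinset x, ‖f y‖ ^ 2 ≤ (k:ℝ) * C := by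
    set t := s.biUnion (fun x => G.neighborFinset x) with ht
    have h1 : ∀ x ∈ s, ∑ y ∈ G.neighborFinset x, ‖f y‖ ^ 2
        = ∑ y ∈ t, if y ∈ G.neighborFinset x then ‖f y‖ ^ 2 else 0 := by
      intro x hx
      rw [← Finset.sum_filter]
      congr 1
      ext y
      simp only [Finset.mem_filter]
      exact ⟨fun h => ⟨Finset.mem_biUnion.2 ⟨x, hx, h⟩, h⟩, fun h => h.2⟩
    have hcardk : ∀ y : V, ((s.filter (fun x => y ∈ G.neighborFinset x)).card : ℝ) ≤ (k:ℝ) := by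
      intro y
      have hsub : s.filter (fun x => y ∈ G.neighborFinset x) ⊆ G.neighborFinset y := by
        intro x hx
        rw [SimpleGraph.mem_neighborFinset]
        have := (Finset.mem_filter.1 hx).2
        rw [SimpleGraph.mem_neighborFinset] at this
        exact this.symm
      have := Finset.card_le_card hsub
      rw [SimpleGraph.card_neighborFinset_eq_degree] at this
      exact_mod_cast le_trans this (hdegk y)
    calc ∑ x ∈ s, ∑ y ∈ G.neighborFinset x, ‖f y‖ ^ 2
        = ∑ x ∈ s, ∑ y ∈ t, if y ∈ G.neighborFinset x then ‖f y‖ ^ 2 else 0 :=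
          Finset.sum_congr rfl h1
      _ = ∑ y ∈ t, ∑ x ∈ s, if y ∈ G.neighborFinset x then ‖f y‖ ^ 2 else 0 :=
          Finset.sum_comm
      _ = ∑ y ∈ t, ((s.filter (fun x => y ∈ G.neighborFinset x)).card : ℝ) * ‖f y‖ ^ 2 := by
          refine Finset.sum_congr rfl fun y _ => ?_
          rw [← Finset.sum_filter, Finset.sum_const, nsmul_eq_mul]
      _ ≤ ∑ y ∈ t, (k:ℝ) * ‖f y‖ ^ 2 :=
          Finset.sum_le_sum fun y _ => mul_le_mul_of_nonneg_right (hcardk y) (sq_nonneg _)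
      _ = (k:ℝ) * ∑ y ∈ t, ‖f y‖ ^ 2 := by rw [Finset.mul_sum]
      _ ≤ (k:ℝ) * C := mul_le_mul_of_nonneg_left (hC t) (by positivity)
  calc ∑ x ∈ s, ‖f x - ∑ y ∈ G.neighborFinset x,
        f y / (Real.sqrt ((G.degree x : ℝ) * (G.degree y : ℝ)) : ℂ)‖ ^ 2
      ≤ ∑ x ∈ s, (2 * ‖f x‖ ^ 2 + 2 * (k:ℝ) * ∑ y ∈ G.neighborFinset x, ‖f y‖ ^ 2) :=
        Finset.sum_le_sum fun x _ => hpt x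
    _ = 2 * (∑ x ∈ s, ‖f x‖ ^ 2) + 2 * (k:ℝ) * ∑ x ∈ s, ∑ y ∈ G.neighborFinset x, ‖f y‖ ^ 2 := by
        rw [Finset.sum_add_distrib, ← Finset.mul_sum, ← Finset.mul_sum]
    _ ≤ 2 * C + 2 * (k:ℝ) * ((k:ℝ) * C) := by
        have hk0 : (0:ℝ) ≤ 2 * (k:ℝ) := by positivity
        have := mul_le_mul_of_nonneg_left hswap hk0
        linarith [mul_le_mul_of_nonneg_left (hC s) (by norm_num : (0:ℝ) ≤ 2)]
    _ = (2 + 2 * (k:ℝ) ^ 2) * C := by ring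

/-- An ℓ² harmonic function on an infinite connected graph vanishes. -/
lemma harmonic_l2_zero {V : Type} [Infinite V] (G : SimpleGraph V)
    [∀ v : V, Fintype (G.neighborSet v)] (hconn : G.Connected) (g : V → ℂ)
    (hsum : Summable fun x => ‖g x‖ ^ 2)
    (hharm : ∀ x : V, (G.degree x : ℂ) * g x = ∑ y ∈ G.neighborFinset x, g y)
    (x : V) : g x = 0 := by
  by_contra hx0
  -- the set where |g|² is at least ‖g x‖² is finite and nonempty
  set ε : ℝ := ‖g x‖ ^ 2 with hε
  have hε0 : 0 < ε := by have := norm_pos_iff.2 hx0; positivity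
  have hfin : {z : V | ε ≤ ‖g z‖ ^ 2}.Finite := by
    have h := hsum.tendsto_cofinite_zero.eventually_lt_const hε0
    have h2 : {z : V | ¬ ‖g z‖ ^ 2 < ε}.Finite := Filter.eventually_cofinite.1 h
    exact h2.subset fun z hz => not_lt.2 hz
  have hne : x ∈ {z : V | ε ≤ ‖g z‖ ^ 2} := le_refl ε
  obtain ⟨x₁, hx₁A, hx₁max⟩ := Set.exists_max_image _ (fun z => ‖g z‖) hfin ⟨x, hne⟩
  set M := ‖g x₁‖ with hM
  set a := g x₁ with ha
  have hεM : ε ≤ M ^ 2 := hx₁A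
  have hMpos : 0 < M := by nlinarith [norm_nonneg (g x₁)]
  have hglobal : ∀ z : V, ‖g z‖ ≤ M := by
    intro z
    by_cases hz : ε ≤ ‖g z‖ ^ 2
    · exact hx₁max z hz
    · push_neg at hz
      nlinarith [norm_nonneg (g z)]
  have normsq : ∀ z : ℂ, ‖z‖ ^ 2 = z.re ^ 2 + z.im ^ 2 := fun z => by
    rw [Complex.sq_norm, Complex.normSq_apply]; ring
  have hM2 : M ^ 2 = a.re ^ 2 + a.im ^ 2 := normsq (g x₁)
  have hstep : ∀ z w : V, G.Adj z w → g z = a → g w = a := by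
    intro z w hzw hz
    have hH := hharm z
    rw [hz] at hH
    have hre : ∀ y ∈ G.neighborFinset z, ((starRingEnd ℂ) a * g y).re = M ^ 2 := by
      have hle : ∀ y ∈ G.neighborFinset z, ((starRingEnd ℂ) a * g y).re ≤ M ^ 2 := by
        intro y _
        calc ((starRingEnd ℂ) a * g y).re ≤ ‖(starRingEnd ℂ) a * g y‖ :=
              Complex.re_le_norm _
          _ = ‖a‖ * ‖g y‖ := by
              rw [norm_mul, Complex.norm_conj]
          _ ≤ M * M := mul_le_mul (le_of_eq hM.symm) (hglobal y) (norm_nonneg _) hMpos.le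
          _ = M ^ 2 := (sq M).symm
      have hsumeq : ∑ y ∈ G.neighborFinset z, ((starRingEnd ℂ) a * g y).re
          = ∑ y ∈ G.neighborFinset z, M ^ 2 := by
        have h1 := congrArg (fun c => ((starRingEnd ℂ) a * c).re) hH
        rw [Finset.mul_sum] at h1
        rw [← Complex.re_sum, ← h1]
        have h2 : (starRingEnd ℂ) a * ((G.degree z : ℂ) * a)
            = (G.degree z : ℂ) * (a * (starRingEnd ℂ) a) := by ring
        rw [h2, Complex.mul_conj]
        rw [Finset.sum_const, SimpleGraph.card_neighborFinset_eq_degree, nsmul_eq_mul]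
        simp only [Complex.mul_re, Complex.natCast_re, Complex.natCast_im, Complex.ofReal_re,
          Complex.ofReal_im, mul_zero, zero_mul, sub_zero]
        rw [Complex.normSq_apply, hM2]
        ring
      exact fun y hy => (Finset.sum_eq_sum_iff_of_le hle).1 hsumeq y hy
    have hw := hre w ((G.mem_neighborFinset z w).2 hzw)
    set b := g w with hb
    have hwle : b.re ^ 2 + b.im ^ 2 ≤ M ^ 2 := by
      have h1 : ‖b‖ ≤ M := hglobal w
      have h2 : ‖b‖ ^ 2 = b.re ^ 2 + b.im ^ 2 := normsq b
      nlinarith [norm_nonneg b]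
    have hdot : a.re * b.re + a.im * b.im = M ^ 2 := by
      have : ((starRingEnd ℂ) a * b).re = a.re * b.re + a.im * b.im := by
        simp [Complex.mul_re, Complex.conj_re, Complex.conj_im]
      rw [this] at hw; exact hw
    have h1 : (a.re - b.re) ^ 2 + (a.im - b.im) ^ 2 ≤ 0 := by nlinarith
    have h2 : b.re = a.re := by nlinarith [sq_nonneg (a.re - b.re), sq_nonneg (a.im - b.im)]
    have h3 : b.im = a.im := by nlinarith [sq_nonneg (a.re - b.re), sq_nonneg (a.im - b.im)]
    exact Complex.ext h2 h3
  have key : ∀ {u v : V} (p : G.Walk u v), g u = a → g v = a := by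
    intro u v p
    induction p with
    | nil => exact id
    | cons h p ih => exact fun hu => ih (hstep _ _ h hu)
  have hall : ∀ z : V, g z = a := by
    intro z
    obtain ⟨p⟩ := hconn.preconnected x₁ z
    exact key p rfl
  have huniv : {z : V | ε ≤ ‖g z‖ ^ 2} = Set.univ :=
    Set.eq_univ_of_forall fun z => by
      rw [Set.mem_setOf_eq, hall z]; exact hεM
  exact Set.infinite_univ (huniv ▸ hfin)

lemma rpow_toReal_two (r : ℝ) : r ^ (2 : ℝ≥0∞).toReal = r ^ 2 := by
  rw [ENNReal.toReal_ofNat, show ((2:ℝ)) = ((2:ℕ):ℝ) by norm_num, Real.rpow_natCast]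

lemma l2_partial_sum_le {V : Type} (f : lp (fun _ : V => ℂ) 2) (s : Finset V) :
    ∑ x ∈ s, ‖f x‖ ^ 2 ≤ ‖f‖ ^ 2 := by
  have hsummable : Summable fun x => ‖f x‖ ^ 2 := by
    have h := (lp.memℓp f).summable (p := 2) (by norm_num)
    simpa [rpow_toReal_two] using h
  have h1 : ∑ x ∈ s, ‖f x‖ ^ 2 ≤ ∑' x, ‖f x‖ ^ 2 :=
    Summable.sum_le_tsum s (fun x _ => sq_nonneg _) hsummable
  have h2 : ‖f‖ ^ 2 = ∑' x, ‖f x‖ ^ 2 := by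
    have := lp.norm_rpow_eq_tsum (p := 2) (by norm_num) f
    simpa [rpow_toReal_two] using this
  linarith

lemma l2_summable_sq {V : Type} (f : lp (fun _ : V => ℂ) 2) :
    Summable fun x => ‖f x‖ ^ 2 := by
  have h := (lp.memℓp f).summable (p := 2) (by norm_num)
  simpa [rpow_toReal_two] using h

/-- the normalized Laplacian of an infinite connected graph with degrees
bounded between 1 and k is a bounded operator on ℓ²(V(G)), and it is injective; in
particular 0 is not an eigenvalue. -/
theorem laplacian_injective_on_infinite_graph
    (V : Type) [Infinite V] (G : SimpleGraph V) [∀ v : V, Fintype (G.neighborSet v)]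
    (hconn : G.Connected) (k : ℕ)
    (hdeg₁ : ∀ v : V, 1 ≤ G.degree v) (hdegk : ∀ v : V, G.degree v ≤ k) :
    ∃ Δ : L2 V ℂ →L[ℂ] L2 V ℂ,
      (∀ (f : L2 V ℂ) (x : V),
        Δ f x = f x - ∑ y ∈ G.neighborFinset x,
          f y / (Real.sqrt ((G.degree x : ℝ) * (G.degree y : ℝ)) : ℂ)) ∧
      Function.Injective Δ := by
  classical
  set F : (V → ℂ) → V → ℂ := fun f x => f x - ∑ y ∈ G.neighborFinset x,
      f y / (Real.sqrt ((G.degree x : ℝ) * (G.degree y : ℝ)) : ℂ) with hF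
  have hbound : ∀ (f : lp (fun _ : V => ℂ) 2) (s : Finset V),
      ∑ x ∈ s, ‖F f x‖ ^ 2 ≤ (2 + 2 * (k : ℝ) ^ 2) * ‖f‖ ^ 2 := fun f s =>
    lap_partial_sum_bound G k hdeg₁ hdegk f (fun t => l2_partial_sum_le f t) s
  have hmem : ∀ f : lp (fun _ : V => ℂ) 2, Memℓp (F f) 2 := by
    intro f
    apply memℓp_gen' (C := (2 + 2 * (k : ℝ) ^ 2) * ‖f‖ ^ 2)
    intro s
    calc ∑ i ∈ s, ‖F f i‖ ^ (2 : ℝ≥0∞).toReal = ∑ i ∈ s, ‖F f i‖ ^ 2 := by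
          simp only [rpow_toReal_two]
      _ ≤ _ := hbound f s
  let L : lp (fun _ : V => ℂ) 2 →ₗ[ℂ] lp (fun _ : V => ℂ) 2 :=
    { toFun := fun f => ⟨F f, hmem f⟩
      map_add' := by
        intro f g
        apply lp.ext
        funext x
        show F (⇑(f + g)) x = F (⇑f) x + F (⇑g) x
        simp only [hF, lp.coeFn_add, Pi.add_apply, add_div, Finset.sum_add_distrib]
        ring
      map_smul' := by
        intro c f
        apply lp.ext
        funext x
        show F (⇑(c • f)) x = c * F (⇑f) x
        simp only [hF, lp.coeFn_smul, Pi.smul_apply, smul_eq_mul, mul_sub, Finset.mul_sum,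
          div_eq_mul_inv, mul_assoc] }
  have hLnorm : ∀ f : lp (fun _ : V => ℂ) 2,
      ‖L f‖ ≤ Real.sqrt (2 + 2 * (k : ℝ) ^ 2) * ‖f‖ := by
    intro f
    apply lp.norm_le_of_forall_sum_le (p := 2) (by norm_num)
      (mul_nonneg (Real.sqrt_nonneg _) (norm_nonneg f))
    intro s
    calc ∑ i ∈ s, ‖(L f) i‖ ^ (2 : ℝ≥0∞).toReal
        = ∑ i ∈ s, ‖F (⇑f) i‖ ^ 2 := by simp only [rpow_toReal_two]; rfl
      _ ≤ (2 + 2 * (k : ℝ) ^ 2) * ‖f‖ ^ 2 := hbound f s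
      _ = (Real.sqrt (2 + 2 * (k : ℝ) ^ 2) * ‖f‖) ^ (2 : ℝ≥0∞).toReal := by
          rw [rpow_toReal_two, mul_pow, Real.sq_sqrt (by positivity)]
  refine ⟨L.mkContinuous _ hLnorm, fun f x => rfl, ?_⟩
  have hker : ∀ f : lp (fun _ : V => ℂ) 2, L.mkContinuous _ hLnorm f = 0 → f = 0 := by
    intro f hf
    have hzero : ∀ x : V, F (⇑f) x = 0 := by
      intro x
      have h := congrFun (congrArg (fun q : lp (fun _ : V => ℂ) 2 => (q : V → ℂ)) hf) x
      simp at h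
      exact h
    have hpoint : ∀ x : V, (f : V → ℂ) x = ∑ y ∈ G.neighborFinset x,
        f y / (Real.sqrt ((G.degree x : ℝ) * (G.degree y : ℝ)) : ℂ) := by
      intro x
      have h := hzero x
      simp only [hF] at h
      exact sub_eq_zero.1 h
    set g : V → ℂ := fun x => f x / (Real.sqrt (G.degree x) : ℂ) with hg
    have h1le : ∀ v : V, (1 : ℝ) ≤ Real.sqrt (G.degree v) := by
      intro v
      rw [show (1:ℝ) = Real.sqrt 1 by simp]
      exact Real.sqrt_le_sqrt (by exact_mod_cast hdeg₁ v)
    have hne : ∀ v : V, ((Real.sqrt (G.degree v) : ℝ) : ℂ) ≠ 0 := fun v =>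
      Complex.ofReal_ne_zero.2 (by linarith [h1le v])
    have hgnorm : ∀ v : V, ‖g v‖ ≤ ‖(f : V → ℂ) v‖ := by
      intro v
      rw [hg]
      simp only
      rw [norm_div, Complex.norm_real, Real.norm_eq_abs,
        abs_of_nonneg (Real.sqrt_nonneg _)]
      exact div_le_self (norm_nonneg _) (h1le v)
    have hsum : Summable fun v => ‖g v‖ ^ 2 :=
      Summable.of_nonneg_of_le (fun v => sq_nonneg _)
        (fun v => pow_le_pow_left₀ (norm_nonneg _) (hgnorm v) 2) (l2_summable_sq f)
    have hharm : ∀ x : V, (G.degree x : ℂ) * g x = ∑ y ∈ G.neighborFinset x, g y := by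
      intro x
      have hds : ((Real.sqrt (G.degree x) : ℝ) : ℂ) * ((Real.sqrt (G.degree x) : ℝ) : ℂ)
          = (G.degree x : ℂ) := by
        rw [← Complex.ofReal_mul, Real.mul_self_sqrt (by positivity)]
        norm_cast
      have hsplit : ∑ y ∈ G.neighborFinset x,
          (f : V → ℂ) y / (Real.sqrt ((G.degree x : ℝ) * (G.degree y : ℝ)) : ℂ)
          = (∑ y ∈ G.neighborFinset x, g y) / (Real.sqrt (G.degree x) : ℂ) := by
        rw [Finset.sum_div]
        refine Finset.sum_congr rfl fun y _ => ?_
        rw [Real.sqrt_mul (by positivity), Complex.ofReal_mul, div_mul_eq_div_div_swap]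
      have hx := hpoint x
      rw [hsplit] at hx
      have hS : (∑ y ∈ G.neighborFinset x, g y)
          = (f : V → ℂ) x * ((Real.sqrt (G.degree x) : ℝ) : ℂ) :=
        (div_eq_iff (hne x)).1 hx.symm
      have hgoal : ∀ s' fx : ℂ, s' ≠ 0 → s' * s' * (fx / s') = fx * s' := by
        intro s' fx hs
        field_simp
      rw [hS, ← hds, hg]
      exact hgoal _ _ (hne x)
    have hgz : ∀ x : V, g x = 0 :=
      harmonic_l2_zero G hconn g hsum hharm
    apply lp.ext
    funext x
    have h := hgz x
    rw [hg] at h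
    simp only at h
    rcases div_eq_zero_iff.1 h with h' | h'
    · simpa using h'
    · exact absurd h' (hne x)
  intro f₁ f₂ h
  have h2 : L.mkContinuous _ hLnorm (f₁ - f₂) = 0 := by rw [map_sub, h, sub_self]
  have := hker _ h2
  exact sub_eq_zero.1 this


end
end
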